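/- arXiv:1806.05515 — 8 statements merged into one kernel-verified Lean document; each statement's English description precedes it below -/
import Mathlib

section
/- For every integer n ≥ 1, the denominator of the rational number Ê_{2n} (written in lowest terms with positive denominator) equals the product of all odd primes p such that (p−1) divides 2n. In particular, (∏_{p odd prime, (p−1)∣2n} p) · Ê_{2n} is an integer. -/
open Finset

/-- p-integrality predicate -/
def PInt (p : ℕ) (x : ℚ) : Prop := ¬ p ∣ x.den

lemma PInt.add {p : ℕ} (hp : p.Prime) {x y : ℚ} (hx : PInt p x) (hy : PInt p y) :
    PInt p (x + y) := fun h =>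
  ((hp.dvd_mul.1 (h.trans (Rat.add_den_dvd x y))).elim hx hy)

lemma PInt.mul {p : ℕ} (hp : p.Prime) {x y : ℚ} (hx : PInt p x) (hy : PInt p y) :
    PInt p (x * y) := fun h =>
  ((hp.dvd_mul.1 (h.trans (Rat.mul_den_dvd x y))).elim hx hy)

lemma PInt.intCast {p : ℕ} (hp : p.Prime) (z : ℤ) : PInt p (z : ℚ) := by
  simp [PInt, Rat.den_intCast, Nat.dvd_one, hp.ne_one]

lemma PInt.natCast {p : ℕ} (hp : p.Prime) (z : ℕ) : PInt p (z : ℚ) := by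
  simpa using PInt.intCast hp (z : ℤ)

lemma PInt.neg {p : ℕ} {x : ℚ} (hx : PInt p x) : PInt p (-x) := by
  simpa [PInt, Rat.den_neg_eq_den] using hx

lemma PInt.sub {p : ℕ} (hp : p.Prime) {x y : ℚ} (hx : PInt p x) (hy : PInt p y) :
    PInt p (x - y) := by
  simpa [sub_eq_add_neg] using hx.add hp hy.neg

lemma PInt.sum {p : ℕ} (hp : p.Prime) {s : Finset ℕ} {f : ℕ → ℚ}
    (h : ∀ i ∈ s, PInt p (f i)) : PInt p (∑ i ∈ s, f i) := by
  classical
  induction s using Finset.induction with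
  | empty => simpa using PInt.intCast hp 0
  | insert _ _ hne ih =>
    rw [Finset.sum_insert hne]
    exact (h _ (mem_insert_self _ _)).add hp (ih fun i hi => h i (mem_insert_of_mem hi))

lemma PInt.one_div_prime {p q : ℕ} (hp : p.Prime) (hq : q.Prime) (hne : p ≠ q) :
    PInt p (1 / (q : ℚ)) := by
  intro h
  rw [one_div, Rat.inv_natCast_den_of_pos hq.pos] at h
  exact hne ((Nat.prime_dvd_prime_iff_eq hp hq).1 h)

/-- power sums mod p -/
lemma powsum_mod (p m : ℕ) (hp : p.Prime) (hm : 1 ≤ m) :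
    ∃ t : ℤ, (∑ k ∈ Finset.range p, (k : ℤ) ^ m) =
      (if (p - 1) ∣ m then -1 else 0) + p * t := by
  haveI : Fact p.Prime := ⟨hp⟩
  classical
  set c : ℤ := if (p - 1) ∣ m then -1 else 0 with hc
  have key : ((∑ k ∈ Finset.range p, (k : ℤ) ^ m - c : ℤ) : ZMod p) = 0 := by
    push_cast
    have h1 : (∑ k ∈ Finset.range p, (k : ZMod p) ^ m) = ∑ x : ZMod p, x ^ m := by
      refine Finset.sum_nbij' (fun i => (i : ZMod p)) (fun x => x.val) ?_ ?_ ?_ ?_ ?_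
      · intro a _; exact Finset.mem_univ _
      · intro x _; exact Finset.mem_range.2 (ZMod.val_lt x)
      · intro a ha; exact ZMod.val_cast_of_lt (Finset.mem_range.1 ha)
      · intro x _; exact ZMod.natCast_rightInverse x
      · intro a _; rfl
    have h2 : (∑ x : ZMod p, x ^ m) = ∑ x : (ZMod p)ˣ, (x : ZMod p) ^ m := by
      have h0 : (∑ x ∈ Finset.univ.erase (0 : ZMod p), x ^ m) = ∑ x : ZMod p, x ^ m :=
        Finset.sum_erase _ (zero_pow (by omega))
      rw [← h0]
      refine (Finset.sum_bij (fun (u : (ZMod p)ˣ) _ => (u : ZMod p)) ?_ ?_ ?_ ?_).symm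
      · intro u _; exact Finset.mem_erase.2 ⟨u.ne_zero, Finset.mem_univ _⟩
      · intro a _ b _ hab; exact Units.ext hab
      · intro x hx
        exact ⟨Units.mk0 x (Finset.mem_erase.1 hx).1, Finset.mem_univ _, rfl⟩
      · intro u _; rfl
    have h3 : (∑ x : (ZMod p)ˣ, (x : ZMod p) ^ m) =
        if p - 1 ∣ m then -1 else 0 := by
      have := FiniteField.sum_pow_units (ZMod p) m
      rwa [ZMod.card] at this
    rw [h1, h2, h3, hc]
    split <;> simp
  have := (ZMod.intCast_zmod_eq_zero_iff_dvd _ p).1 key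
  obtain ⟨t, ht⟩ := this
  exact ⟨t, by linarith [ht]⟩

lemma PInt_pow_div {p j k : ℕ} (hp : p.Prime) (hk : k ≠ 0) (h : k.factorization p ≤ j) :
    PInt p ((p : ℚ) ^ j / (k : ℚ)) := by
  set v := k.factorization p with hv
  set k' := k / p ^ v with hk'
  have hsplit : k = p ^ v * k' := (Nat.ordProj_mul_ordCompl_eq_self k p).symm
  have hnd : ¬ p ∣ k' := Nat.not_dvd_ordCompl hp hk
  have hk'0 : (k' : ℚ) ≠ 0 := by
    have : k' ≠ 0 := by intro h0; rw [h0, Nat.mul_zero] at hsplit; exact hk hsplit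
    exact_mod_cast this
  have hp0 : (p : ℚ) ≠ 0 := by exact_mod_cast hp.ne_zero
  have heq : (p : ℚ) ^ j / (k : ℚ) = (p : ℚ) ^ (j - v) / (k' : ℚ) := by
    rw [hsplit]
    push_cast
    rw [← pow_sub_mul_pow (p : ℚ) h]
    field_simp
  rw [heq]
  have hdvd : ((p : ℚ) ^ (j - v) / (k' : ℚ)).den ∣ k' := by
    have : ((p : ℚ) ^ (j - v) / (k' : ℚ)) = Rat.divInt ((p ^ (j - v) : ℕ) : ℤ) (k' : ℤ) := by
      rw [Rat.divInt_eq_div]; push_cast; ring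
    rw [this]
    exact_mod_cast Rat.den_dvd ((p ^ (j - v) : ℕ) : ℤ) (k' : ℤ)
  exact fun hd => hnd (hd.trans hdvd)

lemma fact_le_of {p k j : ℕ} (hp : p.Prime) (hk : k ≠ 0) (h : k < p ^ (j + 1)) :
    k.factorization p ≤ j := by
  by_contra hlt
  push_neg at hlt
  have hdvd : p ^ (j + 1) ∣ k := dvd_trans (pow_dvd_pow p hlt) (Nat.ordProj_dvd k p)
  exact absurd (Nat.le_of_dvd (Nat.pos_of_ne_zero hk) hdvd) (by omega)

lemma lt_three_pow' : ∀ j : ℕ, j + 2 < 3 ^ (j + 1) := by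
  intro j
  induction j with
  | zero => norm_num
  | succ i ih =>
    calc i + 1 + 2 < 3 * (i + 2) := by omega
    _ ≤ 3 * 3 ^ (i + 1) := Nat.mul_le_mul_left 3 (le_of_lt ih)
    _ = 3 ^ (i + 1 + 1) := (pow_succ' 3 (i + 1)).symm

lemma lt_three_pow {k : ℕ} (hk : 2 ≤ k) : k < 3 ^ (k - 1) := by
  obtain ⟨j, rfl⟩ : ∃ j, k = j + 2 := ⟨k - 2, by omega⟩
  simpa using lt_three_pow' j

lemma odd_fact_le {p k : ℕ} (hp : p.Prime) (hk : Odd k) (h3 : 3 ≤ k) :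
    k.factorization p ≤ k - 2 := by
  rcases eq_or_ne p 2 with rfl | hp2
  · rw [Nat.factorization_eq_zero_of_not_dvd (by
      intro h
      have := Nat.odd_iff.1 hk
      omega)]
    omega
  · have hp3 : 3 ≤ p := by
      rcases hp.two_le.lt_or_eq with h | h
      · omega
      · omega
    apply fact_le_of hp (by omega)
    calc k < 3 ^ (k - 1) := lt_three_pow (by omega)
    _ ≤ p ^ (k - 1) := Nat.pow_le_pow_left hp3 _
    _ = p ^ (k - 2 + 1) := by congr 1; omega

lemma bernoulli_odd_zero {i : ℕ} (hi : Odd i) (h3 : 3 ≤ i) : (bernoulli i : ℚ) = 0 := by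
  rw [bernoulli_eq_bernoulli'_of_ne_one (by omega)]
  exact bernoulli'_eq_zero_of_odd hi (by omega)

lemma two_fact_le {p : ℕ} (hp : p.Prime) : (2 : ℕ).factorization p ≤ 1 := by
  rcases eq_or_ne p 2 with rfl | h
  · simp [Nat.Prime.factorization Nat.prime_two]
  · rw [Nat.factorization_eq_zero_of_not_dvd (fun hd =>
      h ((Nat.prime_dvd_prime_iff_eq hp Nat.prime_two).1 hd))]
    omega

lemma choose_identity (m i : ℕ) (hi : i ≤ m) :
    (m + 1) * m.choose i = (m + 1 - i) * (m + 1).choose i := by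
  have h := Nat.add_one_mul_choose_eq m (m - i)
  have h2 : m - i + 1 = m + 1 - i := by omega
  rw [Nat.choose_symm hi, h2, Nat.choose_symm (by omega : i ≤ m + 1)] at h
  exact h.trans (Nat.mul_comm _ _)

/-- The generic Faulhaber term, divided by `p`, is `p`-integral. -/
lemma term_PInt {m i p : ℕ} (hm : Even m) (h2 : 2 ≤ m) (hi : i < m)
    (hp : p.Prime) (hB : PInt p ((p : ℚ) * bernoulli i)) :
    PInt p ((bernoulli i * ((m + 1).choose i : ℚ) * (p : ℚ) ^ (m + 1 - i) / (m + 1)) / p) := by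
  have hp0 : (p : ℚ) ≠ 0 := Nat.cast_ne_zero.2 hp.ne_zero
  have hm10 : ((m : ℚ) + 1) ≠ 0 := by positivity
  rcases Nat.even_or_odd i with hie | hio
  · rcases Nat.eq_zero_or_pos i with rfl | hipos
    · -- i = 0 : term = p^m/(m+1)
      have : ((bernoulli 0 : ℚ) * (((m + 1).choose 0 : ℕ) : ℚ) * (p : ℚ) ^ (m + 1 - 0) / (m + 1)) / p
          = (p : ℚ) ^ m / ((m + 1 : ℕ) : ℚ) := by
        rw [bernoulli_zero, Nat.choose_zero_right]
        push_cast
        rw [pow_succ]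
        field_simp
      rw [this]
      exact PInt_pow_div hp (by omega) (fact_le_of hp (by omega) (Nat.lt_pow_self (n := m + 1) hp.one_lt))
    · -- i even, 2 ≤ i : set k = m + 1 - i, odd, ≥ 3
      set k := m + 1 - i with hk
      have hik : i ≤ m - 2 := by
        rcases hm with ⟨a, ha⟩; rcases hie with ⟨b, hb⟩; omega
      have hk3 : 3 ≤ k := by omega
      have hkodd : Odd k := by
        rcases hm with ⟨a, ha⟩; rcases hie with ⟨b, hb⟩
        exact Nat.odd_iff.2 (by omega)
      have heq : ((bernoulli i : ℚ) * (((m + 1).choose i : ℕ) : ℚ) * (p : ℚ) ^ k / (m + 1)) / p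
          = ((p : ℚ) * bernoulli i) * ((m.choose i : ℕ) : ℚ) * ((p : ℚ) ^ (k - 2) / ((k : ℕ) : ℚ)) := by
        have hch : ((m : ℚ) + 1) * ((m.choose i : ℕ) : ℚ) = ((k : ℕ) : ℚ) * (((m + 1).choose i : ℕ) : ℚ) := by
          exact_mod_cast congrArg (Nat.cast : ℕ → ℚ) (choose_identity m i (by omega))
        have hk0 : ((k : ℕ) : ℚ) ≠ 0 := Nat.cast_ne_zero.2 (by omega)
        have hpow : (p : ℚ) ^ k = (p : ℚ) ^ (k - 2) * (p : ℚ) ^ 2 := by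
          rw [← pow_add]; congr 1; omega
        field_simp
        rw [hpow]
        linear_combination (-1 * bernoulli i * (p : ℚ) ^ (k - 2) * (p : ℚ) ^ 2) * hch
      rw [heq]
      exact (hB.mul hp (PInt.natCast hp _)).mul hp (PInt_pow_div hp (by omega) (odd_fact_le hp hkodd hk3))
  · rcases eq_or_ne i 1 with rfl | hi1
    · -- i = 1 : term = -(p^(m-1)/2)
      have : ((bernoulli 1 : ℚ) * (((m + 1).choose 1 : ℕ) : ℚ) * (p : ℚ) ^ (m + 1 - 1) / (m + 1)) / p
          = -((p : ℚ) ^ (m - 1) / ((2 : ℕ) : ℚ)) := by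
        rw [bernoulli_one, Nat.choose_one_right]
        push_cast
        have hpow : (p : ℚ) ^ m = (p : ℚ) ^ (m - 1) * (p : ℚ) := by
          rw [← pow_succ]; congr 1; omega
        rw [hpow]
        field_simp
      rw [this]
      exact (PInt_pow_div hp (by omega) (le_trans (two_fact_le hp) (by omega))).neg
    · -- i odd ≥ 3 : bernoulli i = 0
      rw [bernoulli_odd_zero hio (by
        rcases hio with ⟨b, hb⟩; omega)]
      simpa using PInt.intCast hp 0

lemma pB_PInt {p : ℕ} (hp : p.Prime) (i : ℕ)
    (key : Even i → 2 ≤ i → ∃ y : ℚ, PInt p y ∧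
      (bernoulli i : ℚ) = (if (p - 1) ∣ i then (-1 : ℚ) / p else 0) + y) :
    PInt p ((p : ℚ) * bernoulli i) := by
  have hp0 : (p : ℚ) ≠ 0 := Nat.cast_ne_zero.2 hp.ne_zero
  rcases Nat.even_or_odd i with hie | hio
  · rcases Nat.eq_zero_or_pos i with rfl | hipos
    · simpa [bernoulli_zero] using PInt.natCast hp p
    · obtain ⟨y, hy, heq⟩ := key hie (by rcases hie with ⟨a, ha⟩; omega)
      rw [heq, mul_add]
      refine PInt.add hp ?_ ((PInt.natCast hp p).mul hp hy)
      split_ifs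
      · have h1 : (p : ℚ) * (-1 / p) = ((-1 : ℤ) : ℚ) := by field_simp; norm_num
        rw [h1]; exact PInt.intCast hp _
      · simpa using PInt.intCast hp 0
  · rcases eq_or_ne i 1 with rfl | h1
    · have h1 : (p : ℚ) * bernoulli 1 = -((p : ℚ) ^ 1 / ((2 : ℕ) : ℚ)) := by
        rw [bernoulli_one]; push_cast; ring
      rw [h1]
      exact (PInt_pow_div hp (by omega) (two_fact_le hp)).neg
    · rw [bernoulli_odd_zero hio (by rcases hio with ⟨b, hb⟩; omega)]
      simpa using PInt.intCast hp 0

/-- The von Staudt–Clausen theorem, local version. -/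
lemma vsc_key : ∀ m : ℕ, Even m → 2 ≤ m → ∀ p : ℕ, p.Prime →
    ∃ y : ℚ, PInt p y ∧ (bernoulli m : ℚ) = (if (p - 1) ∣ m then (-1 : ℚ) / p else 0) + y := by
  intro m
  induction m using Nat.strong_induction_on with
  | _ m IH =>
  intro hm h2 p hp
  have hp0 : (p : ℚ) ≠ 0 := Nat.cast_ne_zero.2 hp.ne_zero
  have hB : ∀ i, i < m → PInt p ((p : ℚ) * bernoulli i) := fun i him =>
    pB_PInt hp i (fun hie h2i => IH i him hie h2i p hp)
  have faul := sum_range_pow p m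
  rw [Finset.sum_range_succ] at faul
  have hlast : bernoulli m * (((m + 1).choose m : ℕ) : ℚ) * (p : ℚ) ^ (m + 1 - m) / (m + 1)
      = (p : ℚ) * bernoulli m := by
    rw [Nat.choose_succ_self_right]
    have h1 : m + 1 - m = 1 := by omega
    rw [h1]
    push_cast
    field_simp
  rw [hlast] at faul
  obtain ⟨t, ht⟩ := powsum_mod p m hp (by omega)
  have hS : (∑ k ∈ Finset.range p, (k : ℚ) ^ m)
      = ((if (p - 1) ∣ m then (-1 : ℤ) else 0 : ℤ) : ℚ) + p * t := by
    have hcast : (∑ k ∈ Finset.range p, (k : ℚ) ^ m)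
        = ((∑ k ∈ Finset.range p, (k : ℤ) ^ m : ℤ) : ℚ) := by push_cast; rfl
    rw [hcast, ht]; push_cast; ring
  refine ⟨(t : ℚ) - ∑ i ∈ Finset.range m,
      (bernoulli i * (((m + 1).choose i : ℕ) : ℚ) * (p : ℚ) ^ (m + 1 - i) / (m + 1)) / p, ?_, ?_⟩
  · exact (PInt.intCast hp t).sub hp (PInt.sum hp (fun i hi =>
      term_PInt hm h2 (Finset.mem_range.1 hi) hp (hB i (Finset.mem_range.1 hi))))
  · apply mul_left_cancel₀ hp0
    rw [mul_add, mul_sub, Finset.mul_sum]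
    have hterm : ∀ i ∈ Finset.range m, (p : ℚ) *
        ((bernoulli i * (((m + 1).choose i : ℕ) : ℚ) * (p : ℚ) ^ (m + 1 - i) / (m + 1)) / p)
        = bernoulli i * (((m + 1).choose i : ℕ) : ℚ) * (p : ℚ) ^ (m + 1 - i) / (m + 1) := by
      intro i _
      field_simp
    rw [Finset.sum_congr rfl hterm]
    have hif : (p : ℚ) * (if (p - 1) ∣ m then (-1 : ℚ) / p else 0)
        = ((if (p - 1) ∣ m then (-1 : ℤ) else 0 : ℤ) : ℚ) := by
      split_ifs <;> field_simp <;> simp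
    rw [hif]
    rw [hS] at faul
    linarith [faul]

lemma den_int_sub_sum_inv (P : Finset ℕ) (hP : ∀ p ∈ P, Nat.Prime p) (Z : ℤ) (x : ℚ)
    (hx : x = (Z : ℚ) - ∑ p ∈ P, 1 / (p : ℚ)) :
    x.den = ∏ p ∈ P, p ∧ ∃ w : ℤ, ((∏ p ∈ P, p : ℕ) : ℚ) * x = (w : ℚ) := by
  classical
  set D : ℕ := ∏ p ∈ P, p with hD
  have hD0 : D ≠ 0 := Finset.prod_ne_zero_iff.2 (fun p hp => (hP p hp).ne_zero)
  have hterm : ∀ p ∈ P, ((D : ℕ) : ℚ) * (1 / (p : ℚ)) = ((∏ q ∈ P.erase p, q : ℕ) : ℚ) := by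
    intro p hp
    have hsplit : p * ∏ q ∈ P.erase p, q = D := Finset.mul_prod_erase P (fun x => x) hp
    have hp0 : (p : ℚ) ≠ 0 := Nat.cast_ne_zero.2 (hP p hp).ne_zero
    rw [← hsplit]
    push_cast
    field_simp
  set w : ℤ := D * Z - ∑ p ∈ P, (∏ q ∈ P.erase p, q : ℕ) with hw
  have hDx : ((D : ℕ) : ℚ) * x = (w : ℚ) := by
    rw [hx, mul_sub, Finset.mul_sum, Finset.sum_congr rfl hterm, hw]
    push_cast
    ring
  constructor
  · -- denominator computation
    have hden_dvd : x.den ∣ D := by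
      have hxeq : x = Rat.divInt w (D : ℤ) := by
        rw [Rat.divInt_eq_div, eq_div_iff (by exact_mod_cast hD0 : ((D : ℤ) : ℚ) ≠ 0)]
        rw [← hDx]; push_cast; ring
      have := Rat.den_dvd w (D : ℤ)
      rw [← hxeq] at this
      exact_mod_cast this
    have hdvd_den : D ∣ x.den := by
      refine Finset.prod_primes_dvd _ (fun p hp => ?_) (fun p hp => ?_)
      · exact (hP p hp).prime
      · by_contra hnd
        have hpx : PInt p x := hnd
        have hpp := hP p hp
        have hrest : PInt p (∑ q ∈ P.erase p, 1 / (q : ℚ)) := by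
          refine PInt.sum hpp (fun q hq => ?_)
          exact PInt.one_div_prime hpp (hP q (Finset.mem_of_mem_erase hq))
            (fun h => (Finset.mem_erase.1 hq).1 h.symm)
        have hsplit : (1 : ℚ) / p = (Z : ℚ) - x - ∑ q ∈ P.erase p, 1 / (q : ℚ) := by
          rw [hx, ← Finset.add_sum_erase P _ hp]
          ring
        have hbad : PInt p ((1 : ℚ) / p) := by
          rw [hsplit]
          exact ((PInt.intCast hpp Z).sub hpp hpx).sub hpp hrest
        exact hbad (by rw [one_div, Rat.inv_natCast_den_of_pos hpp.pos])
    exact Nat.dvd_antisymm hden_dvd hdvd_den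
  · exact ⟨w, hDx⟩

/-- Euler numbers of the second kind: `Ê n = (2 - 2^n) * B n` with `B 1 = -1/2`. -/
def eulerSecond (n : ℕ) : ℚ := (2 - 2 ^ n) * bernoulli n

theorem denominator_eulerSecond (n : ℕ) (hn : 1 ≤ n) :
    (eulerSecond (2 * n)).den =
      ∏ p ∈ Finset.filter (fun p => Nat.Prime p ∧ Odd p ∧ (p - 1) ∣ 2 * n)
        (Finset.range (2 * n + 2)), p ∧
    ∃ z : ℤ,
      ((∏ p ∈ Finset.filter (fun p => Nat.Prime p ∧ Odd p ∧ (p - 1) ∣ 2 * n)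
        (Finset.range (2 * n + 2)), p : ℕ) : ℚ) * eulerSecond (2 * n) = (z : ℚ) := by
  classical
  set m := 2 * n with hm
  have hmeven : Even m := ⟨n, by omega⟩
  have h2m : 2 ≤ m := by omega
  set Podd := Finset.filter (fun p => Nat.Prime p ∧ Odd p ∧ (p - 1) ∣ m)
    (Finset.range (m + 2)) with hPodd
  set Pfull := Finset.filter (fun p => Nat.Prime p ∧ (p - 1) ∣ m)
    (Finset.range (m + 2)) with hPfull
  have hPprime : ∀ p ∈ Pfull, Nat.Prime p := fun p hp => (Finset.mem_filter.1 hp).2.1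
  have hPoddprime : ∀ p ∈ Podd, Nat.Prime p := fun p hp => (Finset.mem_filter.1 hp).2.1
  -- Step A : bernoulli m = z - ∑_{p ∈ Pfull} 1/p
  have stepA : ∃ z : ℤ, (bernoulli m : ℚ) = (z : ℚ) - ∑ p ∈ Pfull, 1 / (p : ℚ) := by
    set x : ℚ := bernoulli m + ∑ p ∈ Pfull, 1 / (p : ℚ) with hxdef
    have hPI : ∀ q : ℕ, q.Prime → ¬ q ∣ x.den := by
      intro q hq
      obtain ⟨y, hy, hbe⟩ := vsc_key m hmeven h2m q hq
      by_cases hdvd : (q - 1) ∣ m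
      · have hqmem : q ∈ Pfull := by
          refine Finset.mem_filter.2 ⟨Finset.mem_range.2 ?_, hq, hdvd⟩
          have := Nat.le_of_dvd (by omega) hdvd
          omega
        have hx : x = y + ∑ p ∈ Pfull.erase q, 1 / (p : ℚ) := by
          rw [hxdef, hbe, if_pos hdvd, ← Finset.add_sum_erase _ _ hqmem]
          ring
        rw [hx]
        refine PInt.add hq hy (PInt.sum hq (fun p hp => ?_))
        exact PInt.one_div_prime hq (hPprime p (Finset.mem_of_mem_erase hp))
          (fun h => (Finset.mem_erase.1 hp).1 h.symm)
      · have hx : x = y + ∑ p ∈ Pfull, 1 / (p : ℚ) := by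
          rw [hxdef, hbe, if_neg hdvd]
          ring
        rw [hx]
        refine PInt.add hq hy (PInt.sum hq (fun p hp => ?_))
        refine PInt.one_div_prime hq (hPprime p hp) (fun h => hdvd ?_)
        rw [h]
        exact (Finset.mem_filter.1 hp).2.2
    have hden1 : x.den = 1 := Nat.eq_one_iff_not_exists_prime_dvd.2 hPI
    refine ⟨x.num, ?_⟩
    have hxnum : (x.num : ℚ) = x := Rat.coe_int_num_of_den_eq_one hden1
    rw [hxnum, hxdef]
    ring
  obtain ⟨z, hbern⟩ := stepA
  -- Step B : eulerSecond m = Z - ∑_{p ∈ Podd} 1/p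
  set W : ℤ := 2 - 2 ^ m with hW
  have h2mem : 2 ∈ Pfull := by
    refine Finset.mem_filter.2 ⟨Finset.mem_range.2 (by omega), Nat.prime_two, ?_⟩
    simp
  have hPodd_eq : Podd = Pfull.erase 2 := by
    ext p
    simp only [hPodd, hPfull, Finset.mem_filter, Finset.mem_erase, Finset.mem_range]
    constructor
    · rintro ⟨h1, h2, h3, h4⟩
      refine ⟨?_, h1, h2, h4⟩
      rintro rfl
      simp [Nat.odd_iff] at h3
    · rintro ⟨h1, h2, h3, h4⟩
      exact ⟨h2, h3, h3.odd_of_ne_two h1, h4⟩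
  have hdvdW : ∀ p ∈ Podd, (p : ℤ) ∣ (W - 1) := by
    intro p hp
    obtain ⟨hrange, hprime, hodd, hdvd⟩ := Finset.mem_filter.1 hp
    haveI : Fact p.Prime := ⟨hprime⟩
    have hp2 : p ≠ 2 := by
      rintro rfl
      simp [Nat.odd_iff] at hodd
    have h20 : (2 : ZMod p) ≠ 0 := by
      have : ¬ (p : ℕ) ∣ 2 := fun h =>
        hp2 ((Nat.prime_dvd_prime_iff_eq hprime Nat.prime_two).1 h)
      intro h
      exact this ((ZMod.natCast_eq_zero_iff 2 p).1 (by exact_mod_cast h))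
    obtain ⟨c, hc⟩ := hdvd
    have hpow : (2 : ZMod p) ^ m = 1 := by
      rw [hc, pow_mul, ZMod.pow_card_sub_one_eq_one h20, one_pow]
    have : ((W - 1 : ℤ) : ZMod p) = 0 := by
      rw [hW]
      push_cast
      rw [hpow]
      ring
    exact (ZMod.intCast_zmod_eq_zero_iff_dvd _ p).1 this
  set Z : ℤ := W * z - (1 - 2 ^ (m - 1)) - ∑ p ∈ Podd, (W - 1) / (p : ℤ) with hZ
  have hE : eulerSecond m = (Z : ℚ) - ∑ p ∈ Podd, 1 / (p : ℚ) := by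
    have hsplit2 : ∑ p ∈ Pfull, 1 / (p : ℚ) = 1 / 2 + ∑ p ∈ Podd, 1 / (p : ℚ) := by
      rw [hPodd_eq]
      exact (Finset.add_sum_erase _ _ h2mem).symm
    have hterm : ∀ p ∈ Podd, ((W : ℤ) : ℚ) * (1 / (p : ℚ))
        = 1 / (p : ℚ) + (((W - 1) / (p : ℤ) : ℤ) : ℚ) := by
      intro p hp
      have hp0 : ((p : ℕ) : ℚ) ≠ 0 := Nat.cast_ne_zero.2 (hPoddprime p hp).ne_zero
      obtain ⟨c, hc⟩ := hdvdW p hp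
      have hdiveq : (W - 1) / (p : ℤ) = c := by
        rw [hc]
        exact Int.mul_ediv_cancel_left c (by exact_mod_cast (hPoddprime p hp).ne_zero)
      have hWc : ((W : ℤ) : ℚ) = 1 + (p : ℚ) * (c : ℚ) := by
        have : (W : ℤ) = 1 + (p : ℤ) * c := by omega
        exact_mod_cast congrArg (Int.cast : ℤ → ℚ) this
      rw [hdiveq, hWc]
      field_simp
    have hWQ : (2 - 2 ^ m : ℚ) = ((W : ℤ) : ℚ) := by rw [hW]; push_cast; ring
    have hhalf : ((W : ℤ) : ℚ) * (1 / 2) = (((1 - 2 ^ (m - 1) : ℤ)) : ℚ) := by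
      have hpow2Q : (2 : ℚ) ^ m = 2 ^ (m - 1) * 2 := by
        conv_lhs => rw [show m = (m - 1) + 1 from by omega]
        rw [pow_succ]
      rw [hW]
      push_cast
      rw [hpow2Q]
      ring
    simp only [eulerSecond]
    rw [hbern, hWQ, hsplit2]
    calc ((W : ℤ) : ℚ) * ((z : ℚ) - (1 / 2 + ∑ p ∈ Podd, 1 / (p : ℚ)))
        = ((W : ℤ) : ℚ) * (z : ℚ) - ((W : ℤ) : ℚ) * (1 / 2)
          - ∑ p ∈ Podd, ((W : ℤ) : ℚ) * (1 / (p : ℚ)) := by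
          rw [← Finset.mul_sum]; ring
      _ = ((W : ℤ) : ℚ) * (z : ℚ) - (((1 - 2 ^ (m - 1) : ℤ)) : ℚ)
          - ∑ p ∈ Podd, (1 / (p : ℚ) + (((W - 1) / (p : ℤ) : ℤ) : ℚ)) := by
          rw [hhalf, Finset.sum_congr rfl hterm]
      _ = (Z : ℚ) - ∑ p ∈ Podd, 1 / (p : ℚ) := by
          rw [hZ, Finset.sum_add_distrib]
          push_cast
          ring
  exact den_int_sub_sum_inv Podd hPoddprime Z (eulerSecond m) hE
end

section
/- For every positive integer n and every nonnegative integer k, ∑_{j=0}^{n} C(2n+1, 2j) · (2k+1)^{2n−2j+1} · Ê_{2j} = 2(2n+1) · ∑_{l=1}^{k} (2l)^{2n}. -/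
lemma eulerSecond_odd_eq_zero {i : ℕ} (h : Odd i) : eulerSecond i = 0 := by
  rcases eq_or_ne i 1 with rfl | hi
  · norm_num [eulerSecond]
  · have h1 : 1 < i := by
      rcases h with ⟨t, rfl⟩; omega
    rw [eulerSecond, bernoulli_eq_bernoulli'_of_ne_one hi, bernoulli'_eq_zero_of_odd h h1, mul_zero]

/-- Our main sum, as a function of a rational `x`. -/
noncomputable def Sfun (m : ℕ) (x : ℚ) : ℚ :=
  ∑ i ∈ Finset.range (m + 1), (m.choose i : ℚ) * eulerSecond i * x ^ (m - i)

lemma bernoulli_poly_eval (m : ℕ) (x : ℚ) :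
    (Polynomial.bernoulli m).eval x
      = ∑ i ∈ Finset.range (m + 1), (bernoulli i) * (m.choose i : ℚ) * x ^ (m - i) := by
  rw [Polynomial.bernoulli, Polynomial.eval_finset_sum]
  simp [Polynomial.eval_monomial]

lemma Sfun_eq (m : ℕ) (x : ℚ) :
    Sfun m x = 2 * (Polynomial.bernoulli m).eval x
      - 2 ^ m * (Polynomial.bernoulli m).eval (x / 2) := by
  rw [bernoulli_poly_eval, bernoulli_poly_eval, Finset.mul_sum, Finset.mul_sum,
    ← Finset.sum_sub_distrib, Sfun]
  refine Finset.sum_congr rfl fun i hi => ?_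
  have hi' : i ≤ m := Nat.lt_succ_iff.mp (Finset.mem_range.mp hi)
  have h2 : (2:ℚ) ^ m * (x / 2) ^ (m - i) = 2 ^ i * x ^ (m - i) := by
    have : (2:ℚ) ^ m = 2 ^ i * 2 ^ (m - i) := by
      rw [← pow_add, Nat.add_sub_cancel' hi']
    rw [this, div_pow]
    have hne : (2:ℚ) ^ (m - i) ≠ 0 := by positivity
    field_simp
  rw [eulerSecond]
  calc (m.choose i : ℚ) * ((2 - 2 ^ i) * bernoulli i) * x ^ (m - i)
      = 2 * (bernoulli i * (m.choose i) * x ^ (m - i))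
        - (bernoulli i * (m.choose i) * (2 ^ i * x ^ (m - i))) := by ring
    _ = _ := by rw [← h2]; ring

lemma Sfun_step (m : ℕ) (hm : 1 ≤ m) (x : ℚ) :
    Sfun m (x + 2) = Sfun m x + 2 * m * (x + 1) ^ (m - 1) := by
  have A : Polynomial.eval (x + 2) (Polynomial.bernoulli m)
      = Polynomial.eval x (Polynomial.bernoulli m) + m * x ^ (m - 1) + m * (x + 1) ^ (m - 1) := by
    have h1 := Polynomial.bernoulli_eval_one_add m (x + 1)
    have h2 := Polynomial.bernoulli_eval_one_add m x
    rw [show (1:ℚ) + (x + 1) = x + 2 by ring] at h1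
    rw [show (1:ℚ) + x = x + 1 by ring] at h2
    rw [h1, h2]
  have B : Polynomial.eval ((x + 2) / 2) (Polynomial.bernoulli m)
      = Polynomial.eval (x / 2) (Polynomial.bernoulli m) + m * (x / 2) ^ (m - 1) := by
    have h3 := Polynomial.bernoulli_eval_one_add m (x / 2)
    rw [show (1:ℚ) + x / 2 = (x + 2) / 2 by ring] at h3
    rw [h3]
  have h4 : (2:ℚ) ^ m * (x / 2) ^ (m - 1) = 2 * x ^ (m - 1) := by
    have h5 : (2:ℚ) ^ m = 2 ^ 1 * 2 ^ (m - 1) := by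
      rw [← pow_add, Nat.add_sub_cancel' hm]
    have hne : (2:ℚ) ^ (m - 1) ≠ 0 := by positivity
    rw [h5, div_pow, pow_one]
    field_simp
  rw [Sfun_eq, Sfun_eq, A, B]
  linear_combination (-(m : ℚ)) * h4

lemma Sfun_neg (n : ℕ) (x : ℚ) : Sfun (2 * n + 1) (-x) = -Sfun (2 * n + 1) x := by
  rw [Sfun, Sfun, ← Finset.sum_neg_distrib]
  refine Finset.sum_congr rfl fun i hi => ?_
  have hi' : i ≤ 2 * n + 1 := Nat.lt_succ_iff.mp (Finset.mem_range.mp hi)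
  rcases Nat.even_or_odd i with he | ho
  · have hodd : Odd (2 * n + 1 - i) := by
      rcases he with ⟨t, rfl⟩
      refine ⟨n - t, by omega⟩
    rw [hodd.neg_pow]
    ring
  · rw [eulerSecond_odd_eq_zero ho]
    ring

lemma Sfun_one (n : ℕ) (hn : 1 ≤ n) : Sfun (2 * n + 1) 1 = 0 := by
  have hstep := Sfun_step (2 * n + 1) (by omega) (-1)
  have hpow : ((-1:ℚ) + 1) ^ (2 * n + 1 - 1) = 0 := by
    rw [neg_add_cancel]
    exact zero_pow (by omega)
  rw [hpow, mul_zero, add_zero] at hstep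
  have : (-1:ℚ) + 2 = 1 := by ring
  rw [this] at hstep
  have hneg := Sfun_neg n 1
  rw [show -(1:ℚ) = -1 from rfl] at hstep
  linarith [hstep, hneg]

lemma sum_range_two_mul (f : ℕ → ℚ) (N : ℕ) :
    ∑ i ∈ Finset.range (2 * N), f i
      = ∑ j ∈ Finset.range N, (f (2 * j) + f (2 * j + 1)) := by
  induction N with
  | zero => simp
  | succ N ih =>
    rw [show 2 * (N + 1) = 2 * N + 1 + 1 by ring, Finset.sum_range_succ, Finset.sum_range_succ,
      ih, Finset.sum_range_succ]
    ring

theorem eulerSecond_sum_formula (n k : ℕ) (hn : 1 ≤ n) :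
    ∑ j ∈ Finset.range (n + 1),
        ((2 * n + 1).choose (2 * j) : ℚ) * (2 * k + 1) ^ (2 * n - 2 * j + 1) *
          eulerSecond (2 * j) =
      2 * (2 * n + 1) * ∑ l ∈ Finset.Icc 1 k, ((2 * l : ℕ) : ℚ) ^ (2 * n) := by
  have hL : ∀ K : ℕ, ∑ j ∈ Finset.range (n + 1),
      ((2 * n + 1).choose (2 * j) : ℚ) * (2 * K + 1) ^ (2 * n - 2 * j + 1) *
        eulerSecond (2 * j) = Sfun (2 * n + 1) (2 * K + 1) := by
    intro K
    rw [Sfun, show 2 * n + 1 + 1 = 2 * (n + 1) by ring, sum_range_two_mul]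
    refine Finset.sum_congr rfl fun j hj => ?_
    have hj' : j ≤ n := Nat.lt_succ_iff.mp (Finset.mem_range.mp hj)
    have hodd : Odd (2 * j + 1) := ⟨j, by ring⟩
    rw [eulerSecond_odd_eq_zero hodd, mul_zero, zero_mul, add_zero]
    have hexp : 2 * n - 2 * j + 1 = 2 * n + 1 - 2 * j := by omega
    rw [hexp]
    ring
  rw [hL]
  induction k with
  | zero =>
    simp only [Nat.cast_zero, mul_zero, zero_add]
    rw [show Finset.Icc 1 0 = ∅ by rfl]
    simpa using Sfun_one n hn
  | succ k ih =>
    have hstep := Sfun_step (2 * n + 1) (by omega) (2 * k + 1)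
    have e : (2 * ((k:ℚ) + 1) + 1) = (2 * k + 1) + 2 := by ring
    rw [Finset.sum_Icc_succ_top (by omega : 1 ≤ k + 1)]
    push_cast
    rw [e, hstep, ih]
    push_cast
    ring
end

section
/- For every integer n ≥ 0, the rational number (2n+1)!/(2ⁿ · n!) · Ê_{2n} = (2n+1)(2n−1)⋯3·1 · Ê_{2n} is an integer. -/
open Nat Finset PowerSeries

private lemma exp_sub_one_ne_zero : (exp ℚ - 1 : ℚ⟦X⟧) ≠ 0 := by
  intro h
  have := congrArg (coeff 1) h
  simp [coeff_exp] at this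

private lemma key_ps :
    (exp ℚ + 1) * rescale (2 : ℚ) (bernoulliPowerSeries ℚ) =
      C (2 : ℚ) * bernoulliPowerSeries ℚ := by
  apply mul_right_cancel₀ exp_sub_one_ne_zero
  have h1 : (exp ℚ + 1) * (exp ℚ - 1) = rescale (2 : ℚ) (exp ℚ - 1) := by
    have h2 : rescale (2 : ℚ) (exp ℚ) = exp ℚ ^ 2 := by
      rw [exp_pow_eq_rescale_exp]; norm_num
    rw [map_sub, map_one, h2]; ring
  calc (exp ℚ + 1) * rescale (2 : ℚ) (bernoulliPowerSeries ℚ) * (exp ℚ - 1)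
      = rescale (2 : ℚ) (bernoulliPowerSeries ℚ) * ((exp ℚ + 1) * (exp ℚ - 1)) := by ring
    _ = rescale (2 : ℚ) (bernoulliPowerSeries ℚ * (exp ℚ - 1)) := by rw [h1, ← map_mul]
    _ = rescale (2 : ℚ) X := by rw [bernoulliPowerSeries_mul_exp_sub_one]
    _ = C (2 : ℚ) * X := rescale_X 2
    _ = C (2 : ℚ) * (bernoulliPowerSeries ℚ * (exp ℚ - 1)) := by
        rw [bernoulliPowerSeries_mul_exp_sub_one]
    _ = C (2 : ℚ) * bernoulliPowerSeries ℚ * (exp ℚ - 1) := by ring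

/-- `∑_{k=0}^{N} C(N,k) 2^k B_k = (2 - 2^N) B_N`. -/
private lemma sum_choose_two_pow (N : ℕ) :
    ∑ k ∈ range (N + 1), (N.choose k : ℚ) * 2 ^ k * bernoulli k =
      (2 - 2 ^ N) * bernoulli N := by
  have h := congrArg (coeff N) key_ps
  have hNfac : (N ! : ℚ) ≠ 0 := by exact_mod_cast N.factorial_ne_zero
  rw [add_mul, one_mul, map_add, coeff_C_mul, coeff_mul] at h
  simp only [bernoulliPowerSeries, coeff_rescale, coeff_mk, coeff_exp, map_one,
    Algebra.algebraMap_self, RingHom.id_apply, one_div] at h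
  rw [Nat.sum_antidiagonal_eq_sum_range_succ
      (fun a b => ((a ! : ℚ))⁻¹ * (2 ^ b * (bernoulli b / (b ! : ℚ))))] at h
  have key : ∀ k ∈ range (N + 1),
      ((k ! : ℚ))⁻¹ * (2 ^ (N - k) * (bernoulli (N - k) / ((N - k)! : ℚ)))
        = ((N.choose k : ℚ) * 2 ^ (N - k) * bernoulli (N - k)) / N ! := by
    intro k hk
    rw [mem_range] at hk
    have hk' : k ≤ N := Nat.lt_succ_iff.mp hk
    rw [Nat.cast_choose ℚ hk']
    have h1 : (k ! : ℚ) ≠ 0 := by exact_mod_cast k.factorial_ne_zero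
    have h2 : ((N - k)! : ℚ) ≠ 0 := by exact_mod_cast (N - k).factorial_ne_zero
    field_simp
  rw [Finset.sum_congr rfl key, ← Finset.sum_div] at h
  have hgoal : ∑ k ∈ range (N + 1), (N.choose k : ℚ) * 2 ^ k * bernoulli k
      = ∑ k ∈ range (N + 1), (N.choose k : ℚ) * 2 ^ (N - k) * bernoulli (N - k) := by
    rw [← Finset.sum_range_reflect]
    refine Finset.sum_congr rfl fun j hj => ?_
    rw [mem_range] at hj
    have hj' : j ≤ N := Nat.lt_succ_iff.mp hj
    rw [Nat.add_sub_cancel, Nat.choose_symm hj']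
  rw [hgoal]
  have h2 : (∑ k ∈ range (N + 1), (N.choose k : ℚ) * 2 ^ (N - k) * bernoulli (N - k)) / N !
      + 2 ^ N * (bernoulli N / N !) = 2 * (bernoulli N / N !) := h
  field_simp at h2
  linarith [h2]

private lemma eulerSecond_odd (j : ℕ) (hj : Odd j) : eulerSecond j = 0 := by
  unfold eulerSecond
  rcases Nat.lt_or_ge j 2 with h | h
  · interval_cases j
    · simp at hj
    · norm_num
  · have : bernoulli j = 0 := by
      rw [bernoulli, bernoulli'_eq_zero_of_odd hj (by omega)]
      ring
    rw [this, mul_zero]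

private lemma bernoulli_odd_zero_s5 (j : ℕ) (hj : Odd j) (h1 : 1 < j) : bernoulli j = 0 := by
  rw [bernoulli, bernoulli'_eq_zero_of_odd hj h1]; ring

private lemma sum_range_two_mul_s5 (f : ℕ → ℚ) (n : ℕ) :
    ∑ k ∈ range (2 * n), f k = ∑ m ∈ range n, (f (2 * m) + f (2 * m + 1)) := by
  induction n with
  | zero => simp
  | succ n ih =>
    have : 2 * (n + 1) = (2 * n + 1) + 1 := by ring
    rw [this, Finset.sum_range_succ, Finset.sum_range_succ, ih, Finset.sum_range_succ]
    ring

/-- The recurrence: for `n ≥ 1`, `∑_{m=0}^{n} C(2n+1, 2m) Ê_{2m} = 0`. -/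
private lemma euler_rec (n : ℕ) (hn : 1 ≤ n) :
    ∑ m ∈ range (n + 1), ((2 * n + 1).choose (2 * m) : ℚ) * eulerSecond (2 * m) = 0 := by
  set N := 2 * n + 1 with hN
  have hNodd : Odd N := ⟨n, by omega⟩
  have hBN : bernoulli N = 0 := bernoulli_odd_zero_s5 N hNodd (by omega)
  -- full sum over all k
  have hfull : ∑ k ∈ range (N + 1), (N.choose k : ℚ) * eulerSecond k = 0 := by
    have e1 : ∑ k ∈ range (N + 1), (N.choose k : ℚ) * bernoulli k = 0 := by
      rw [Finset.sum_range_succ, sum_bernoulli, if_neg (show N ≠ 1 by omega),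
        Nat.choose_self, hBN]
      simp
    have e2 := sum_choose_two_pow N
    have : ∑ k ∈ range (N + 1), (N.choose k : ℚ) * eulerSecond k
        = 2 * (∑ k ∈ range (N + 1), (N.choose k : ℚ) * bernoulli k)
          - ∑ k ∈ range (N + 1), (N.choose k : ℚ) * 2 ^ k * bernoulli k := by
      rw [Finset.mul_sum, ← Finset.sum_sub_distrib]
      refine Finset.sum_congr rfl fun k _ => ?_
      unfold eulerSecond
      ring
    rw [this, e1, e2, hBN]
    ring
  have hsplit : ∑ k ∈ range (2 * (n + 1)), (N.choose k : ℚ) * eulerSecond k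
      = ∑ m ∈ range (n + 1), ((N.choose (2 * m) : ℚ) * eulerSecond (2 * m)
          + (N.choose (2 * m + 1) : ℚ) * eulerSecond (2 * m + 1)) :=
    sum_range_two_mul_s5 _ _
  have hodd : ∀ m, (N.choose (2 * m + 1) : ℚ) * eulerSecond (2 * m + 1) = 0 := fun m => by
    rw [eulerSecond_odd _ ⟨m, by omega⟩, mul_zero]
  have hidx : N + 1 = 2 * (n + 1) := by omega
  rw [hidx, hsplit] at hfull
  simp only [hodd, add_zero] at hfull
  exact hfull

private lemma dfac_dvd_dfac {a : ℕ} : ∀ {b : ℕ}, a ≤ b → (2 * a + 1)‼ ∣ (2 * b + 1)‼ := by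
  intro b
  induction b with
  | zero =>
    intro h
    have ha : a = 0 := by omega
    subst ha; exact dvd_rfl
  | succ b ih =>
    intro h
    rcases Nat.lt_or_ge a (b + 1) with h' | h'
    · have h2 : (2 * (b + 1) + 1)‼ = (2 * b + 3) * (2 * b + 1)‼ := by
        rw [show 2 * (b + 1) + 1 = (2 * b + 1) + 2 from by ring, Nat.doubleFactorial_add_two]
      exact h2 ▸ (ih (by omega)).mul_left _
    · have ha : a = b + 1 := by omega
      subst ha; exact dvd_rfl

/-- Main integrality lemma: `(2n+1)‼ · Ê_{2n}` is an integer. -/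
private lemma main_int : ∀ n : ℕ, ∃ z : ℤ, ((2 * n + 1)‼ : ℚ) * eulerSecond (2 * n) = z := by
  intro n
  induction n using Nat.strong_induction_on with
  | _ n ih =>
    match n with
    | 0 =>
      refine ⟨1, ?_⟩
      simp [eulerSecond]
      norm_num
    | (s + 1) =>
      set n := s + 1 with hn
      choose c hc using fun m (hm : m < n) => ih m hm
      -- divisibility quotient
      have hdvd : ∀ m, m < n → (2 * m + 1)‼ ∣ (2 * s + 1)‼ := fun m hm =>
        dfac_dvd_dfac (by omega)
      refine ⟨-∑ m ∈ (range n).attach,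
        (((2 * n + 1).choose (2 * m.1) : ℤ) * ((2 * s + 1)‼ / (2 * m.1 + 1)‼ : ℕ))
          * c m.1 (mem_range.mp m.2), ?_⟩
      have hrec := euler_rec n (by omega)
      rw [Finset.sum_range_succ] at hrec
      have hchoose : ((2 * n + 1).choose (2 * n) : ℚ) = (2 * n + 1 : ℚ) := by
        have : (2 * n + 1).choose (2 * n) = 2 * n + 1 := Nat.choose_succ_self_right (2 * n)
        rw [this]; push_cast; ring
      rw [hchoose] at hrec
      -- (2n+1)‼ = (2n+1) * (2s+1)‼
      have hdf : ((2 * n + 1)‼ : ℚ) = (2 * n + 1 : ℚ) * ((2 * s + 1)‼ : ℚ) := by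
        have : 2 * n + 1 = (2 * s + 1) + 2 := by omega
        rw [this, Nat.doubleFactorial_add_two]
        push_cast; rw [hn]; push_cast; ring
      have key : ((2 * n + 1)‼ : ℚ) * eulerSecond (2 * n)
          = -∑ m ∈ range n, ((2 * n + 1).choose (2 * m) : ℚ) * ((2 * s + 1)‼ : ℚ)
              * eulerSecond (2 * m) := by
        rw [hdf]
        have : (2 * n + 1 : ℚ) * eulerSecond (2 * n)
            = -∑ m ∈ range n, ((2 * n + 1).choose (2 * m) : ℚ) * eulerSecond (2 * m) := by
          linarith [hrec]
        calc (2 * n + 1 : ℚ) * ((2 * s + 1)‼ : ℚ) * eulerSecond (2 * n)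
            = ((2 * s + 1)‼ : ℚ) * ((2 * n + 1 : ℚ) * eulerSecond (2 * n)) := by ring
          _ = ((2 * s + 1)‼ : ℚ) *
              (-∑ m ∈ range n, ((2 * n + 1).choose (2 * m) : ℚ) * eulerSecond (2 * m)) := by
              rw [this]
          _ = -∑ m ∈ range n, ((2 * n + 1).choose (2 * m) : ℚ) * ((2 * s + 1)‼ : ℚ)
              * eulerSecond (2 * m) := by
              rw [mul_neg, Finset.mul_sum]
              exact neg_inj.mpr (Finset.sum_congr rfl fun m _ => by ring)
      rw [key, ← Finset.sum_attach (range n)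
        (fun m => ((2 * n + 1).choose (2 * m) : ℚ) * ((2 * s + 1)‼ : ℚ) * eulerSecond (2 * m)),
        Int.cast_neg, Int.cast_sum, neg_inj]
      refine Finset.sum_congr rfl fun m _ => ?_
      have hm : m.1 < n := mem_range.mp m.2
      have hq : (((2 * s + 1)‼ / (2 * m.1 + 1)‼ : ℕ) : ℚ) * ((2 * m.1 + 1)‼ : ℚ)
          = ((2 * s + 1)‼ : ℚ) := by
        rw [← Nat.cast_mul, Nat.div_mul_cancel (hdvd m.1 hm)]
      rw [Int.cast_mul, Int.cast_mul, Int.cast_natCast, Int.cast_natCast, ← hc m.1 hm, ← hq]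
      ring

theorem doubleFactorial_mul_eulerSecond_isInt (n : ℕ) :
    ∃ z : ℤ,
      (((2 * n + 1).factorial : ℚ) / (2 ^ n * n.factorial)) * eulerSecond (2 * n) =
        (z : ℚ) := by
  obtain ⟨z, hz⟩ := main_int n
  refine ⟨z, ?_⟩
  have hfac : ((2 * n + 1).factorial : ℚ) = ((2 * n + 1)‼ : ℚ) * (2 ^ n * n.factorial) := by
    have h1 : (2 * n + 1)! = (2 * n + 1)‼ * (2 * n)‼ := Nat.factorial_eq_mul_doubleFactorial (2 * n)
    have h2 : (2 * n)‼ = 2 ^ n * n ! := Nat.doubleFactorial_two_mul n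
    rw [h1, h2]
    push_cast; ring
  rw [hfac, mul_div_assoc, div_self (by positivity), mul_one, hz]
end

section
/- For all nonnegative integers n and k, (1/2)·∑_{m=0}^{n} C(n,m) · 4^m · ((−1)^{n−m} + (−3)^{n−m}) · B_m^{(−k)} = ((−1)^k/2) · ∑_{l=0}^{k} (−1)^l · l! · S(k,l) · ((4l+3)ⁿ + (4l+1)ⁿ), where B_m^{(−k)} = ∑_{j=0}^{m} (−1)^{m−j} · j! · (j+1)^k · S(m,j) is the poly-Bernoulli number of negative index. (That is, the poly-Euler number of the second kind Ê_n^{(−k)} admits the stated closed form.) -/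
/-- Stirling numbers of the second kind (as rationals),
`S(n,j) = (1/j!) ∑_{i=0}^{j} (-1)^{j-i} C(j,i) i^n`. -/
def stirling2 (n j : ℕ) : ℚ :=
  (1 / j.factorial) *
    ∑ i ∈ Finset.range (j + 1), (-1) ^ (j - i) * (j.choose i : ℚ) * (i : ℚ) ^ n

/-- Poly-Euler numbers of the second kind with negative index `-k`:
`Ê_n^{(-k)} = ((-1)^k/2) ∑_{l=0}^{k} (-1)^l l! S(k,l) ((4l+3)^n + (4l+1)^n)`. -/
def polyEulerSecondNeg (n k : ℕ) : ℚ :=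
  ((-1) ^ k / 2) *
    ∑ l ∈ Finset.range (k + 1),
      (-1) ^ l * (l.factorial : ℚ) * stirling2 k l *
        ((4 * (l : ℚ) + 3) ^ n + (4 * (l : ℚ) + 1) ^ n)

/-- Poly-Bernoulli numbers of negative index `-k`:
`B_m^{(-k)} = ∑_{j=0}^{m} (-1)^{m-j} j! (j+1)^k S(m,j)`. -/
def polyBernoulliNeg (k m : ℕ) : ℚ :=
  ∑ j ∈ Finset.range (m + 1),
    (-1) ^ (m - j) * (j.factorial : ℚ) * ((j : ℚ) + 1) ^ k * stirling2 m j

open Finset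

def st (k l : ℕ) : ℚ :=
  ∑ i ∈ Finset.range (l + 1), (-1) ^ (l - i) * (l.choose i : ℚ) * (i : ℚ) ^ k

lemma neg_one_pow_sub' {i j : ℕ} (h : i ≤ j) :
    ((-1 : ℚ)) ^ (j - i) = (-1) ^ j * (-1) ^ i := by
  have h1 : ((-1:ℚ))^(j-i) * (-1)^i = (-1)^j := by
    rw [← pow_add, Nat.sub_add_cancel h]
  have h2 : ((-1:ℚ))^i * (-1)^i = 1 := by
    rw [← pow_add, ← two_mul, pow_mul]; norm_num
  calc ((-1:ℚ))^(j-i) = (-1)^(j-i) * ((-1)^i * (-1)^i) := by rw [h2, mul_one]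
    _ = (-1)^j * (-1)^i := by rw [← mul_assoc, h1]

lemma st_eq_zero : ∀ m j, m < j → st m j = 0 := by
  intro m
  induction m using Nat.strong_induction_on with
  | _ m ih =>
    match m with
    | 0 =>
      intro j hj
      have h0 : st 0 j = ∑ i ∈ range (j+1), (1:ℚ)^i * (-1)^(j-i) * (j.choose i : ℚ) := by
        unfold st
        refine Finset.sum_congr rfl fun i _ => ?_
        rw [pow_zero, one_pow]; ring
      rw [h0, ← add_pow]
      have h11 : (1:ℚ) + -1 = 0 := by norm_num
      rw [h11]
      exact zero_pow (by omega)
    | m+1 =>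
      intro j hj
      obtain ⟨j', rfl⟩ : ∃ j', j = j' + 1 := ⟨j - 1, by omega⟩
      have step1 : st (m+1) (j'+1)
          = ∑ i ∈ range (j'+1), (-1:ℚ)^(j'-i) * ((j'+1).choose (i+1) : ℚ) * ((i:ℚ)+1)^(m+1) := by
        unfold st
        rw [Finset.sum_range_succ']
        simp [Nat.succ_sub_succ]
      have step2 : ∀ i, ((j'+1).choose (i+1) : ℚ) * ((i:ℚ)+1)^(m+1)
          = ((j':ℚ)+1) * ((j'.choose i : ℚ)) * ((i:ℚ)+1)^m := by
        intro i
        have hnat : (i+1) * (j'+1).choose (i+1) = (j'+1) * j'.choose i := by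
          rw [mul_comm]
          exact (Nat.add_one_mul_choose_eq j' i).symm
        have hq : ((i:ℚ)+1) * ((j'+1).choose (i+1) : ℚ) = ((j':ℚ)+1) * (j'.choose i : ℚ) := by
          exact_mod_cast congrArg (fun x : ℕ => (x:ℚ)) hnat
        calc ((j'+1).choose (i+1) : ℚ) * ((i:ℚ)+1)^(m+1)
            = (((i:ℚ)+1) * ((j'+1).choose (i+1) : ℚ)) * ((i:ℚ)+1)^m := by ring
          _ = (((j':ℚ)+1) * (j'.choose i : ℚ)) * ((i:ℚ)+1)^m := by rw [hq]
      have step3 : st (m+1) (j'+1)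
          = ((j':ℚ)+1) * ∑ i ∈ range (j'+1), (-1:ℚ)^(j'-i) * (j'.choose i : ℚ) * ((i:ℚ)+1)^m := by
        rw [step1, Finset.mul_sum]
        refine Finset.sum_congr rfl fun i _ => ?_
        rw [mul_assoc, step2 i]; ring
      have step4 : ∀ i : ℕ, ((i:ℚ)+1)^m = ∑ q ∈ range (m+1), (i:ℚ)^q * (1:ℚ)^(m-q) * (m.choose q : ℚ) := by
        intro i; exact add_pow (i:ℚ) 1 m
      rw [step3]
      have : ∑ i ∈ range (j'+1), (-1:ℚ)^(j'-i) * (j'.choose i : ℚ) * ((i:ℚ)+1)^m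
          = ∑ q ∈ range (m+1), (m.choose q : ℚ) * st q j' := by
        simp_rw [step4, Finset.mul_sum]
        rw [Finset.sum_comm]
        refine Finset.sum_congr rfl fun q _ => ?_
        unfold st
        rw [Finset.mul_sum]
        refine Finset.sum_congr rfl fun i _ => ?_
        ring
      rw [this]
      rw [Finset.sum_eq_zero, mul_zero]
      intro q hq
      have hq' : q < m+1 := mem_range.mp hq
      rw [ih q hq' j' (by omega), mul_zero]


lemma alt_partial (M : ℕ) : ∀ m, ∑ t ∈ range (m+1), (-1:ℚ)^t * ((M+1).choose t : ℚ)
    = (-1)^m * (M.choose m : ℚ) := by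
  intro m; induction m with
  | zero => simp
  | succ m ih =>
    rw [Finset.sum_range_succ, ih]
    have h : ((M+1).choose (m+1) : ℚ) = (M.choose m : ℚ) + (M.choose (m+1) : ℚ) := by
      rw [Nat.choose_succ_succ']; push_cast; ring
    rw [h, pow_succ]; ring

def Vs (l M m : ℕ) : ℚ := ∑ i ∈ range (m+1), (-1:ℚ)^i * ((l+i).choose i : ℚ) * (M.choose (m-i) : ℚ)

lemma Vs_rec (l M m : ℕ) : Vs (l+1) M (m+1) = Vs l M (m+1) - Vs (l+1) M m := by
  have peel1 : Vs (l+1) M (m+1)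
      = (M.choose (m+1) : ℚ)
        + ∑ i ∈ range (m+1), (-1:ℚ)^(i+1) * ((l+1+(i+1)).choose (i+1) : ℚ) * (M.choose (m-i) : ℚ) := by
    unfold Vs
    rw [Finset.sum_range_succ']
    simp [Nat.succ_sub_succ, add_comm]
  have peel2 : Vs l M (m+1)
      = (M.choose (m+1) : ℚ)
        + ∑ i ∈ range (m+1), (-1:ℚ)^(i+1) * ((l+(i+1)).choose (i+1) : ℚ) * (M.choose (m-i) : ℚ) := by
    unfold Vs
    rw [Finset.sum_range_succ']
    simp [Nat.succ_sub_succ, add_comm]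
  have pascal : ∀ i : ℕ, ((l+1+(i+1)).choose (i+1) : ℚ)
      = ((l+1+i).choose i : ℚ) + ((l+(i+1)).choose (i+1) : ℚ) := by
    intro i
    have : (l+1+(i+1)).choose (i+1) = (l+1+i).choose i + (l+1+i).choose (i+1) := by
      have := Nat.choose_succ_succ' (l+1+i) i
      rw [show l+1+(i+1) = l+1+i+1 from by ring]
      exact this
    rw [this, show l+(i+1) = l+1+i from by ring]
    push_cast; ring
  rw [peel1, peel2]
  simp_rw [pascal]
  have hsplit : ∀ x ∈ range (m+1),
      (-1:ℚ)^(x+1) * (((l+1+x).choose x : ℚ) + ((l+(x+1)).choose (x+1) : ℚ)) * ((M.choose (m-x)) : ℚ)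
      = (-1:ℚ)^(x+1) * ((l+(x+1)).choose (x+1) : ℚ) * ((M.choose (m-x)) : ℚ)
        + (-(1:ℚ)) * ((-1:ℚ)^x * ((l+1+x).choose x : ℚ) * ((M.choose (m-x)) : ℚ)) := by
    intro x _; rw [pow_succ]; ring
  rw [Finset.sum_congr rfl hsplit, Finset.sum_add_distrib, ← Finset.mul_sum]
  unfold Vs
  ring

lemma Vs_eq (l : ℕ) : ∀ n m, Vs l (l+n+1) m = (n.choose m : ℚ) := by
  induction l with
  | zero =>
    intro n m
    have h1 : Vs 0 (0+n+1) m = ∑ i ∈ range (m+1), (-1:ℚ)^i * ((n+1).choose (m-i) : ℚ) := by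
      unfold Vs
      refine Finset.sum_congr rfl fun i _ => ?_
      simp
    rw [h1]
    have h2 : ∀ i ∈ range (m+1), (-1:ℚ)^i * ((n+1).choose (m-i) : ℚ)
        = (fun t => (-1:ℚ)^(m-t) * ((n+1).choose t : ℚ)) (m - i) := by
      intro i hi
      have hi' : i ≤ m := by have := mem_range.mp hi; omega
      simp only []
      rw [show m - (m - i) = i from by omega]
    have hr := Finset.sum_range_reflect (fun t => (-1:ℚ)^(m-t) * ((n+1).choose t : ℚ)) (m+1)
    simp only [Nat.add_sub_cancel] at hr
    rw [Finset.sum_congr rfl h2, hr]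
    have h3 : ∑ t ∈ range (m+1), (-1:ℚ)^(m-t) * ((n+1).choose t : ℚ)
        = (-1:ℚ)^m * ∑ t ∈ range (m+1), (-1:ℚ)^t * ((n+1).choose t : ℚ) := by
      rw [Finset.mul_sum]
      refine Finset.sum_congr rfl fun t ht => ?_
      rw [neg_one_pow_sub' (by have := mem_range.mp ht; omega : t ≤ m)]
      ring
    rw [h3, alt_partial n m, ← mul_assoc, ← pow_add, ← two_mul, pow_mul]
    norm_num
  | succ l ih =>
    intro n m
    induction m with
    | zero => simp [Vs]
    | succ m ihm =>
      rw [Vs_rec]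
      have h1 : Vs l (l+1+n+1) (m+1) = ((n+1).choose (m+1) : ℚ) := by
        have := ih (n+1) (m+1)
        rw [show l+(n+1)+1 = l+1+n+1 from by ring] at this
        exact this
      rw [h1, ihm]
      rw [Nat.choose_succ_succ' n m]
      push_cast; ring

lemma choose_shift (l i : ℕ) : (i+1) * (l+i+1).choose (i+1) = (l+1) * (l+i+1).choose i := by
  have h1 : (l+i+1) * (l+i).choose i = (l+i+1).choose (i+1) * (i+1) := Nat.add_one_mul_choose_eq (l+i) i
  have h2 : (l+i+1) * (l+i).choose l = (l+i+1).choose (l+1) * (l+1) := Nat.add_one_mul_choose_eq (l+i) l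
  have h3 : (l+i).choose l = (l+i).choose i := Nat.choose_symm_add
  have h4 : (l+i+1).choose (l+1) = (l+i+1).choose i := by
    rw [show l+i+1 = (l+1)+i from by ring]
    exact Nat.choose_symm_add
  rw [h3, h4] at h2
  calc (i+1) * (l+i+1).choose (i+1) = (l+i+1) * (l+i).choose i := by rw [mul_comm]; exact h1.symm
    _ = (l+i+1).choose i * (l+1) := h2
    _ = (l+1) * (l+i+1).choose i := mul_comm _ _

lemma hockey (r : ℕ) : ∀ t, ∑ s ∈ range (t+1), (r+s).choose s = (r+t+1).choose t := by
  intro t; induction t with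
  | zero => simp
  | succ t ih =>
    rw [Finset.sum_range_succ, ih, show r+(t+1)+1 = (r+t+1)+1 from by ring,
      show r+(t+1) = r+t+1 from by ring]
    exact (Nat.choose_succ_succ' (r+t+1) t).symm

lemma trino (l i s : ℕ) :
    (i+s+l).choose l * (i+s).choose i = (l+i).choose i * (i+s+l).choose s := by
  have h1 : (i+s+l).choose l * l.factorial * (i+s).factorial = (i+s+l).factorial := by
    have := Nat.choose_mul_factorial_mul_factorial (show l ≤ i+s+l by omega)
    rwa [show i+s+l-l = i+s from by omega] at this
  have h2 : (i+s).choose i * i.factorial * s.factorial = (i+s).factorial := by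
    have := Nat.choose_mul_factorial_mul_factorial (show i ≤ i+s by omega)
    rwa [show i+s-i = s from by omega] at this
  have h3 : (l+i).choose i * i.factorial * l.factorial = (l+i).factorial := by
    have := Nat.choose_mul_factorial_mul_factorial (show i ≤ l+i by omega)
    rwa [show l+i-i = l from by omega] at this
  have h4 : (i+s+l).choose s * s.factorial * (l+i).factorial = (i+s+l).factorial := by
    have := Nat.choose_mul_factorial_mul_factorial (show s ≤ i+s+l by omega)
    rwa [show i+s+l-s = l+i from by omega] at this
  have key : ((i+s+l).choose l * (i+s).choose i) * (l.factorial * (i.factorial * s.factorial))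
      = ((l+i).choose i * (i+s+l).choose s) * (l.factorial * (i.factorial * s.factorial)) := by
    calc ((i+s+l).choose l * (i+s).choose i) * (l.factorial * (i.factorial * s.factorial))
        = ((i+s+l).choose l * l.factorial) * ((i+s).choose i * i.factorial * s.factorial) := by ring
      _ = ((i+s+l).choose l * l.factorial) * (i+s).factorial := by rw [h2]
      _ = (i+s+l).factorial := by rw [← h1]
      _ = (i+s+l).choose s * s.factorial * (l+i).factorial := h4.symm
      _ = (i+s+l).choose s * s.factorial * ((l+i).choose i * i.factorial * l.factorial) := by rw [h3]
      _ = ((l+i).choose i * (i+s+l).choose s) * (l.factorial * (i.factorial * s.factorial)) := by ring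
  exact Nat.eq_of_mul_eq_mul_right (by positivity) key

lemma collapse (n l i : ℕ) (h : i ≤ n) :
    ∑ j ∈ range (n+1), (j+l).choose l * j.choose i = (l+i).choose i * (l+n+1).choose (n-i) := by
  rw [Finset.range_eq_Ico, ← Finset.sum_Ico_consecutive _ (Nat.zero_le i) (by omega : i ≤ n+1)]
  have first : ∑ j ∈ Ico 0 i, (j+l).choose l * j.choose i = 0 := by
    refine Finset.sum_eq_zero fun j hj => ?_
    have : j < i := (Finset.mem_Ico.mp hj).2
    rw [Nat.choose_eq_zero_of_lt this, mul_zero]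
  rw [first, zero_add, Finset.sum_Ico_eq_sum_range,
    show n+1-i = (n-i)+1 from by omega]
  have per : ∀ s ∈ range ((n-i)+1), (i+s+l).choose l * (i+s).choose i
      = (l+i).choose i * ((l+i)+s).choose s := by
    intro s _
    rw [trino l i s, show i+s+l = (l+i)+s from by ring]
  rw [Finset.sum_congr rfl per, ← Finset.mul_sum, hockey (l+i) (n-i),
    show l+i+(n-i)+1 = l+n+1 from by omega]

lemma Klem : ∀ p n l, p ≤ n →
    ∑ i ∈ range (n+1), (-1:ℚ)^i * ((l+i).choose i : ℚ) * ((l+n+1).choose (n-i) : ℚ) * (i:ℚ)^p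
      = (-1)^p * ((l:ℚ)+1)^p := by
  intro p
  induction p using Nat.strong_induction_on with
  | _ p ih =>
    match p with
    | 0 =>
      intro n l _
      simp only [pow_zero, mul_one, one_mul]
      have := Vs_eq l n n
      unfold Vs at this
      rw [this]; simp
    | q+1 =>
      intro n l hp
      obtain ⟨n', rfl⟩ : ∃ n', n = n' + 1 := ⟨n - 1, by omega⟩
      rw [Finset.sum_range_succ']
      have hz : (-1:ℚ)^0 * ((l+0).choose 0 : ℚ) * ((l+(n'+1)+1).choose (n'+1-0) : ℚ) * ((0:ℕ):ℚ)^(q+1) = 0 := by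
        simp
      rw [hz, add_zero]
      have per : ∀ i ∈ range (n'+1),
          (-1:ℚ)^(i+1) * ((l+(i+1)).choose (i+1) : ℚ) * ((l+(n'+1)+1).choose (n'+1-(i+1)) : ℚ) * (((i+1:ℕ)):ℚ)^(q+1)
          = (-(((l:ℚ)+1))) * ((-1:ℚ)^i * (((l+1)+i).choose i : ℚ) * (((l+1)+n'+1).choose (n'-i) : ℚ) * ((i:ℚ)+1)^q) := by
        intro i _
        have hcast : ((i:ℚ)+1) * ((l+i+1).choose (i+1) : ℚ) = ((l:ℚ)+1) * ((l+i+1).choose i : ℚ) := by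
          exact_mod_cast congrArg (fun x : ℕ => (x:ℚ)) (choose_shift l i)
        rw [show l+(i+1) = l+i+1 from by ring, show n'+1-(i+1) = n'-i from by omega,
          show l+(n'+1)+1 = (l+1)+n'+1 from by ring, show (l+1)+i = l+i+1 from by ring]
        push_cast
        calc (-1:ℚ)^(i+1) * ((l+i+1).choose (i+1) : ℚ) * (((l+1)+n'+1).choose (n'-i) : ℚ) * ((i:ℚ)+1)^(q+1)
            = (-1:ℚ)^(i+1) * (((i:ℚ)+1) * ((l+i+1).choose (i+1) : ℚ)) * (((l+1)+n'+1).choose (n'-i) : ℚ) * ((i:ℚ)+1)^q := by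
              ring
          _ = (-1:ℚ)^(i+1) * (((l:ℚ)+1) * ((l+i+1).choose i : ℚ)) * (((l+1)+n'+1).choose (n'-i) : ℚ) * ((i:ℚ)+1)^q := by
              rw [hcast]
          _ = (-(((l:ℚ)+1))) * ((-1:ℚ)^i * ((l+i+1).choose i : ℚ) * (((l+1)+n'+1).choose (n'-i) : ℚ) * ((i:ℚ)+1)^q) := by
              rw [pow_succ]; ring
      rw [Finset.sum_congr rfl per, ← Finset.mul_sum]
      have inner : ∑ i ∈ range (n'+1),
          (-1:ℚ)^i * (((l+1)+i).choose i : ℚ) * (((l+1)+n'+1).choose (n'-i) : ℚ) * ((i:ℚ)+1)^q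
          = (-1:ℚ)^q * ((l:ℚ)+1)^q := by
        have expand : ∀ i : ℕ, ((i:ℚ)+1)^q = ∑ t ∈ range (q+1), (i:ℚ)^t * (1:ℚ)^(q-t) * (q.choose t : ℚ) :=
          fun i => add_pow (i:ℚ) 1 q
        have pert : ∀ t ∈ range (q+1),
            (∑ i ∈ range (n'+1), (-1:ℚ)^i * (((l+1)+i).choose i : ℚ) * (((l+1)+n'+1).choose (n'-i) : ℚ)
              * ((i:ℚ)^t * (1:ℚ)^(q-t) * (q.choose t : ℚ)))
            = ((-((l:ℚ)+2))^t * (1:ℚ)^(q-t) * (q.choose t : ℚ)) := by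
          intro t ht
          have ht' : t ≤ q := by have := mem_range.mp ht; omega
          have hK := ih t (by omega) n' (l+1) (by omega)
          push_cast at hK
          calc ∑ i ∈ range (n'+1), (-1:ℚ)^i * (((l+1)+i).choose i : ℚ) * (((l+1)+n'+1).choose (n'-i) : ℚ)
                * ((i:ℚ)^t * (1:ℚ)^(q-t) * (q.choose t : ℚ))
              = (∑ i ∈ range (n'+1), (-1:ℚ)^i * (((l+1)+i).choose i : ℚ) * (((l+1)+n'+1).choose (n'-i) : ℚ)
                * (i:ℚ)^t) * ((1:ℚ)^(q-t) * (q.choose t : ℚ)) := by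
                rw [Finset.sum_mul]; refine Finset.sum_congr rfl fun i _ => by ring
            _ = ((-1:ℚ)^t * (((l:ℚ)+1)+1)^t) * ((1:ℚ)^(q-t) * (q.choose t : ℚ)) := by rw [hK]
            _ = ((-((l:ℚ)+2))^t * (1:ℚ)^(q-t) * (q.choose t : ℚ)) := by
                have hnp : (-(((l:ℚ)+2)))^t = (-1:ℚ)^t * ((l:ℚ)+2)^t := by
                  rw [neg_pow]
                rw [hnp]; ring
        calc ∑ i ∈ range (n'+1), (-1:ℚ)^i * (((l+1)+i).choose i : ℚ) * (((l+1)+n'+1).choose (n'-i) : ℚ) * ((i:ℚ)+1)^q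
            = ∑ t ∈ range (q+1), (-((l:ℚ)+2))^t * (1:ℚ)^(q-t) * (q.choose t : ℚ) := by
              simp_rw [expand, Finset.mul_sum]
              rw [Finset.sum_comm]
              exact Finset.sum_congr rfl pert
          _ = (-((l:ℚ)+2) + 1)^q := (add_pow _ _ _).symm
          _ = (-1:ℚ)^q * ((l:ℚ)+1)^q := by
              rw [show -((l:ℚ)+2) + 1 = -((l:ℚ)+1) from by ring]
              rw [neg_pow]
      rw [inner, pow_succ]
      ring

lemma core (n l : ℕ) (b : ℚ) :
    ∑ i ∈ range (n+1), (-1:ℚ)^i * ((l+i).choose i : ℚ) * ((l+n+1).choose (n-i) : ℚ) * (4*(i:ℚ) + b)^n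
      = (b - 4*((l:ℚ)+1))^n := by
  have expand : ∀ i : ℕ, (4*(i:ℚ) + b)^n
      = ∑ p ∈ range (n+1), ((4:ℚ)^p * (i:ℚ)^p) * b^(n-p) * (n.choose p : ℚ) := by
    intro i
    rw [add_pow]
    exact Finset.sum_congr rfl fun p _ => by rw [mul_pow]
  have perp : ∀ p ∈ range (n+1),
      (∑ i ∈ range (n+1), (-1:ℚ)^i * ((l+i).choose i : ℚ) * ((l+n+1).choose (n-i) : ℚ)
        * (((4:ℚ)^p * (i:ℚ)^p) * b^(n-p) * (n.choose p : ℚ)))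
      = (-(4*((l:ℚ)+1)))^p * b^(n-p) * (n.choose p : ℚ) := by
    intro p hp
    have hp' : p ≤ n := by have := mem_range.mp hp; omega
    have hK := Klem p n l hp'
    calc (∑ i ∈ range (n+1), (-1:ℚ)^i * ((l+i).choose i : ℚ) * ((l+n+1).choose (n-i) : ℚ)
        * (((4:ℚ)^p * (i:ℚ)^p) * b^(n-p) * (n.choose p : ℚ)))
        = (∑ i ∈ range (n+1), (-1:ℚ)^i * ((l+i).choose i : ℚ) * ((l+n+1).choose (n-i) : ℚ) * (i:ℚ)^p)
          * ((4:ℚ)^p * b^(n-p) * (n.choose p : ℚ)) := by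
          rw [Finset.sum_mul]; exact Finset.sum_congr rfl fun i _ => by ring
      _ = ((-1:ℚ)^p * ((l:ℚ)+1)^p) * ((4:ℚ)^p * b^(n-p) * (n.choose p : ℚ)) := by rw [hK]
      _ = (-(4*((l:ℚ)+1)))^p * b^(n-p) * (n.choose p : ℚ) := by
          have hnp : (-(4*(((l:ℚ)+1))))^p = (-1:ℚ)^p * (4*((l:ℚ)+1))^p := by rw [neg_pow]
          rw [hnp, mul_pow]; ring
  calc ∑ i ∈ range (n+1), (-1:ℚ)^i * ((l+i).choose i : ℚ) * ((l+n+1).choose (n-i) : ℚ) * (4*(i:ℚ) + b)^n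
      = ∑ p ∈ range (n+1), (-(4*((l:ℚ)+1)))^p * b^(n-p) * (n.choose p : ℚ) := by
        simp_rw [expand, Finset.mul_sum]
        rw [Finset.sum_comm]
        exact Finset.sum_congr rfl perp
    _ = (-(4*((l:ℚ)+1)) + b)^n := (add_pow _ _ _).symm
    _ = (b - 4*((l:ℚ)+1))^n := by rw [show -(4*((l:ℚ)+1)) + b = b - 4*((l:ℚ)+1) from by ring]

lemma stirlingNeg (k j : ℕ) :
    ∑ l ∈ range (k+1), (-1:ℚ)^l * ((j+l).choose l : ℚ) * st k l = (-1)^k * ((j:ℚ)+1)^k := by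
  have step1 : ∀ l ∈ range (k+1), (-1:ℚ)^l * ((j+l).choose l : ℚ) * st k l
      = ∑ i ∈ range (k+1), (-1:ℚ)^i * ((j+l).choose l : ℚ) * (l.choose i : ℚ) * (i:ℚ)^k := by
    intro l hl
    have hl' : l ≤ k := by have := mem_range.mp hl; omega
    unfold st
    rw [Finset.mul_sum]
    have e1 : ∀ i ∈ range (l+1), ((-1:ℚ)^l * ((j+l).choose l : ℚ)) * ((-1:ℚ)^(l-i) * (l.choose i : ℚ) * (i:ℚ)^k)
        = (-1:ℚ)^i * ((j+l).choose l : ℚ) * (l.choose i : ℚ) * (i:ℚ)^k := by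
      intro i hi
      have hi' : i ≤ l := by have := mem_range.mp hi; omega
      rw [neg_one_pow_sub' hi']
      have h2 : ((-1:ℚ))^l * (-1)^l = 1 := by
        rw [← pow_add, ← two_mul, pow_mul]; norm_num
      calc ((-1:ℚ)^l * ((j+l).choose l : ℚ)) * ((-1:ℚ)^l * (-1:ℚ)^i * (l.choose i : ℚ) * (i:ℚ)^k)
          = ((-1:ℚ)^l * (-1)^l) * ((-1:ℚ)^i * ((j+l).choose l : ℚ) * (l.choose i : ℚ) * (i:ℚ)^k) := by ring
        _ = (-1:ℚ)^i * ((j+l).choose l : ℚ) * (l.choose i : ℚ) * (i:ℚ)^k := by rw [h2, one_mul]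
    rw [Finset.sum_congr rfl e1]
    refine Finset.sum_subset (by intro x hx; simp only [mem_range] at *; omega) ?_
    intro i _ hi
    have : l < i := by simp only [mem_range] at hi ⊢; omega
    rw [Nat.choose_eq_zero_of_lt this]
    push_cast; ring
  rw [Finset.sum_congr rfl step1, Finset.sum_comm]
  have peri : ∀ i ∈ range (k+1),
      (∑ l ∈ range (k+1), (-1:ℚ)^i * ((j+l).choose l : ℚ) * (l.choose i : ℚ) * (i:ℚ)^k)
      = (-1:ℚ)^i * ((j+i).choose i : ℚ) * ((j+k+1).choose (k-i) : ℚ) * (i:ℚ)^k := by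
    intro i hi
    have hi' : i ≤ k := by have := mem_range.mp hi; omega
    have hc := collapse k j i hi'
    have hcQ : (∑ l ∈ range (k+1), ((l+j).choose j : ℚ) * (l.choose i : ℚ))
        = ((j+i).choose i : ℚ) * ((j+k+1).choose (k-i) : ℚ) := by exact_mod_cast hc
    have e2 : ∀ l ∈ range (k+1), (-1:ℚ)^i * ((j+l).choose l : ℚ) * (l.choose i : ℚ) * (i:ℚ)^k
        = ((-1:ℚ)^i * (i:ℚ)^k) * (((l+j).choose j : ℚ) * (l.choose i : ℚ)) := by
      intro l _
      rw [show j+l = l+j from by ring, Nat.choose_symm_add]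
      ring
    rw [Finset.sum_congr rfl e2, ← Finset.mul_sum, hcQ]
    ring
  rw [Finset.sum_congr rfl peri]
  have hK := Klem k k j le_rfl
  calc ∑ i ∈ range (k+1), (-1:ℚ)^i * ((j+i).choose i : ℚ) * ((j+k+1).choose (k-i) : ℚ) * (i:ℚ)^k
      = (-1:ℚ)^k * ((j:ℚ)+1)^k := hK

section Main

lemma sq1 (m : ℕ) : (-1:ℚ)^m * (-1)^m = 1 := by
  rw [← pow_add, ← two_mul, pow_mul]; norm_num

lemma fact_st (m j : ℕ) : (j.factorial : ℚ) * stirling2 m j = st m j := by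
  unfold stirling2 st
  rw [← mul_assoc, mul_one_div, div_self (by exact_mod_cast j.factorial_ne_zero), one_mul]

lemma hbin (n : ℕ) (x : ℚ) :
    ∑ m ∈ range (n+1), (n.choose m : ℚ) * 4^m * ((-1:ℚ)^(n-m) + (-3:ℚ)^(n-m)) * (-1:ℚ)^m * x^m
      = (-1:ℚ)^n * ((4*x+1)^n + (4*x+3)^n) := by
  have e : ∀ m ∈ range (n+1),
      (n.choose m : ℚ) * 4^m * ((-1:ℚ)^(n-m) + (-3:ℚ)^(n-m)) * (-1:ℚ)^m * x^m
      = (-1:ℚ)^n * ((4*x)^m * (1:ℚ)^(n-m) * (n.choose m : ℚ) + (4*x)^m * (3:ℚ)^(n-m) * (n.choose m : ℚ)) := by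
    intro m hm
    have hm' : m ≤ n := by have := Finset.mem_range.mp hm; omega
    have s1 : (-1:ℚ)^(n-m) = (-1)^n * (-1)^m := neg_one_pow_sub' hm'
    have s2 : (-3:ℚ)^(n-m) = (-1:ℚ)^(n-m) * 3^(n-m) := by
      rw [show (-3:ℚ) = (-1) * 3 from by norm_num, mul_pow]
    rw [s2, s1]
    linear_combination ((n.choose m:ℚ) * 4^m * x^m * (-1:ℚ)^n * (1 + (3:ℚ)^(n-m))) * sq1 m
  rw [Finset.sum_congr rfl e, ← Finset.mul_sum, Finset.sum_add_distrib, ← add_pow, ← add_pow]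

lemma hj1k (k j : ℕ) : ((j:ℚ)+1)^k
    = (-1:ℚ)^k * ∑ l ∈ range (k+1), (-1:ℚ)^l * ((j+l).choose l : ℚ) * st k l := by
  rw [stirlingNeg k j, ← mul_assoc, sq1 k, one_mul]

lemma perl (n l : ℕ) :
    ∑ j ∈ range (n+1), (-1:ℚ)^j * ((j+l).choose l : ℚ)
        * (∑ i ∈ range (j+1), (-1:ℚ)^(j-i) * (j.choose i : ℚ) * ((4*(i:ℚ)+1)^n + (4*(i:ℚ)+3)^n))
      = (-1:ℚ)^n * ((4*(l:ℚ)+3)^n + (4*(l:ℚ)+1)^n) := by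
  have e1 : ∀ j ∈ range (n+1), (-1:ℚ)^j * ((j+l).choose l : ℚ)
        * (∑ i ∈ range (j+1), (-1:ℚ)^(j-i) * (j.choose i : ℚ) * ((4*(i:ℚ)+1)^n + (4*(i:ℚ)+3)^n))
      = ∑ i ∈ range (n+1), (-1:ℚ)^i * ((j+l).choose l : ℚ) * (j.choose i : ℚ)
          * ((4*(i:ℚ)+1)^n + (4*(i:ℚ)+3)^n) := by
    intro j hj
    have hjn : j ≤ n := by have := Finset.mem_range.mp hj; omega
    rw [Finset.mul_sum]
    have e2 : ∀ i ∈ range (j+1),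
        ((-1:ℚ)^j * ((j+l).choose l : ℚ)) * ((-1:ℚ)^(j-i) * (j.choose i : ℚ) * ((4*(i:ℚ)+1)^n + (4*(i:ℚ)+3)^n))
        = (-1:ℚ)^i * ((j+l).choose l : ℚ) * (j.choose i : ℚ) * ((4*(i:ℚ)+1)^n + (4*(i:ℚ)+3)^n) := by
      intro i hi
      have hi' : i ≤ j := by have := Finset.mem_range.mp hi; omega
      rw [neg_one_pow_sub' hi']
      linear_combination ((-1:ℚ)^i * ((j+l).choose l : ℚ) * (j.choose i : ℚ) * ((4*(i:ℚ)+1)^n + (4*(i:ℚ)+3)^n)) * sq1 j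
    rw [Finset.sum_congr rfl e2]
    refine Finset.sum_subset (Finset.range_subset_range.mpr (by omega)) ?_
    intro i hi1 hi
    have : j < i := by simp only [Finset.mem_range] at hi ⊢; omega
    rw [Nat.choose_eq_zero_of_lt this]
    push_cast; ring
  rw [Finset.sum_congr rfl e1, Finset.sum_comm]
  have e3 : ∀ i ∈ range (n+1),
      ∑ j ∈ range (n+1), (-1:ℚ)^i * ((j+l).choose l : ℚ) * (j.choose i : ℚ)
          * ((4*(i:ℚ)+1)^n + (4*(i:ℚ)+3)^n)
      = (-1:ℚ)^i * ((l+i).choose i : ℚ) * ((l+n+1).choose (n-i) : ℚ) * (4*(i:ℚ)+1)^n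
        + (-1:ℚ)^i * ((l+i).choose i : ℚ) * ((l+n+1).choose (n-i) : ℚ) * (4*(i:ℚ)+3)^n := by
    intro i hi
    have hi' : i ≤ n := by have := Finset.mem_range.mp hi; omega
    have hc := collapse n l i hi'
    have hcQ : (∑ j ∈ range (n+1), ((j+l).choose l : ℚ) * (j.choose i : ℚ))
        = ((l+i).choose i : ℚ) * ((l+n+1).choose (n-i) : ℚ) := by exact_mod_cast hc
    have e4 : ∀ j ∈ range (n+1), (-1:ℚ)^i * ((j+l).choose l : ℚ) * (j.choose i : ℚ)
          * ((4*(i:ℚ)+1)^n + (4*(i:ℚ)+3)^n)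
        = ((-1:ℚ)^i * ((4*(i:ℚ)+1)^n + (4*(i:ℚ)+3)^n)) * (((j+l).choose l : ℚ) * (j.choose i : ℚ)) := by
      intro j _; ring
    rw [Finset.sum_congr rfl e4, ← Finset.mul_sum, hcQ]
    ring
  rw [Finset.sum_congr rfl e3, Finset.sum_add_distrib]
  have c1 := core n l 1
  have c3 := core n l 3
  rw [c1, c3]
  rw [show (1:ℚ) - 4*((l:ℚ)+1) = -(4*(l:ℚ)+3) from by ring,
    show (3:ℚ) - 4*((l:ℚ)+1) = -(4*(l:ℚ)+1) from by ring,
    neg_pow (4*(l:ℚ)+3) n, neg_pow (4*(l:ℚ)+1) n]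
  ring

end Main

lemma hpB2 (n k : ℕ) : ∀ m ∈ range (n+1), polyBernoulliNeg k m
    = ∑ j ∈ range (n+1), (-1:ℚ)^m * (-1:ℚ)^j * ((j:ℚ)+1)^k * st m j := by
  intro m hm
  have hmn : m ≤ n := by have := Finset.mem_range.mp hm; omega
  unfold polyBernoulliNeg
  have e1 : ∀ j ∈ range (m+1),
      (-1:ℚ)^(m-j) * (j.factorial : ℚ) * ((j:ℚ)+1)^k * stirling2 m j
      = (-1:ℚ)^m * (-1:ℚ)^j * ((j:ℚ)+1)^k * st m j := by
    intro j hj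
    have hj' : j ≤ m := by have := Finset.mem_range.mp hj; omega
    calc (-1:ℚ)^(m-j) * (j.factorial : ℚ) * ((j:ℚ)+1)^k * stirling2 m j
        = (-1:ℚ)^(m-j) * ((j:ℚ)+1)^k * ((j.factorial : ℚ) * stirling2 m j) := by ring
      _ = (-1:ℚ)^(m-j) * ((j:ℚ)+1)^k * st m j := by rw [fact_st]
      _ = (-1:ℚ)^m * (-1:ℚ)^j * ((j:ℚ)+1)^k * st m j := by rw [neg_one_pow_sub' hj']
  rw [Finset.sum_congr rfl e1]
  refine Finset.sum_subset (Finset.range_subset_range.mpr (by omega)) ?_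
  intro j _ hj
  have : m < j := by simp only [Finset.mem_range] at hj ⊢; omega
  rw [st_eq_zero m j this]
  ring

theorem polyEulerSecondNeg_closed_form (n k : ℕ) :
    (1 / 2 : ℚ) *
        ∑ m ∈ Finset.range (n + 1),
          (n.choose m : ℚ) * 4 ^ m * ((-1) ^ (n - m) + (-3) ^ (n - m)) *
            polyBernoulliNeg k m =
      polyEulerSecondNeg n k := by
  have key : ∑ m ∈ Finset.range (n + 1),
        (n.choose m : ℚ) * 4 ^ m * ((-1) ^ (n - m) + (-3) ^ (n - m)) * polyBernoulliNeg k m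
      = (-1:ℚ)^k * ∑ l ∈ range (k+1), (-1:ℚ)^l * st k l
          * ((4*(l:ℚ)+3)^n + (4*(l:ℚ)+1)^n) := by
    have perj : ∀ j ∈ range (n+1),
        ∑ m ∈ range (n+1), (n.choose m : ℚ) * 4^m * ((-1:ℚ)^(n-m) + (-3:ℚ)^(n-m))
          * ((-1:ℚ)^m * (-1:ℚ)^j * ((j:ℚ)+1)^k * st m j)
        = (-1:ℚ)^j * ((j:ℚ)+1)^k * ((-1:ℚ)^n
            * ∑ i ∈ range (j+1), (-1:ℚ)^(j-i) * (j.choose i : ℚ)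
                * ((4*(i:ℚ)+1)^n + (4*(i:ℚ)+3)^n)) := by
      intro j _
      have inner_m : ∑ m ∈ range (n+1),
          (n.choose m : ℚ) * 4^m * ((-1:ℚ)^(n-m) + (-3:ℚ)^(n-m)) * (-1:ℚ)^m * st m j
          = (-1:ℚ)^n * ∑ i ∈ range (j+1), (-1:ℚ)^(j-i) * (j.choose i : ℚ)
              * ((4*(i:ℚ)+1)^n + (4*(i:ℚ)+3)^n) := by
        unfold st
        simp_rw [Finset.mul_sum]
        rw [Finset.sum_comm]
        refine Finset.sum_congr rfl fun i _ => ?_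
        calc ∑ m ∈ range (n+1), (n.choose m : ℚ) * 4^m * ((-1:ℚ)^(n-m) + (-3:ℚ)^(n-m)) * (-1:ℚ)^m
              * ((-1:ℚ)^(j-i) * (j.choose i : ℚ) * (i:ℚ)^m)
            = (∑ m ∈ range (n+1), (n.choose m : ℚ) * 4^m * ((-1:ℚ)^(n-m) + (-3:ℚ)^(n-m)) * (-1:ℚ)^m * (i:ℚ)^m)
              * ((-1:ℚ)^(j-i) * (j.choose i : ℚ)) := by
              rw [Finset.sum_mul]; exact Finset.sum_congr rfl fun m _ => by ring
          _ = ((-1:ℚ)^n * ((4*(i:ℚ)+1)^n + (4*(i:ℚ)+3)^n)) * ((-1:ℚ)^(j-i) * (j.choose i : ℚ)) := by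
              rw [hbin n (i:ℚ)]
          _ = (-1:ℚ)^n * ((-1:ℚ)^(j-i) * (j.choose i : ℚ) * ((4*(i:ℚ)+1)^n + (4*(i:ℚ)+3)^n)) := by ring
      calc ∑ m ∈ range (n+1), (n.choose m : ℚ) * 4^m * ((-1:ℚ)^(n-m) + (-3:ℚ)^(n-m))
            * ((-1:ℚ)^m * (-1:ℚ)^j * ((j:ℚ)+1)^k * st m j)
          = ((-1:ℚ)^j * ((j:ℚ)+1)^k)
            * ∑ m ∈ range (n+1), (n.choose m : ℚ) * 4^m * ((-1:ℚ)^(n-m) + (-3:ℚ)^(n-m)) * (-1:ℚ)^m * st m j := by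
            rw [Finset.mul_sum]; exact Finset.sum_congr rfl fun m _ => by ring
        _ = ((-1:ℚ)^j * ((j:ℚ)+1)^k) * ((-1:ℚ)^n
            * ∑ i ∈ range (j+1), (-1:ℚ)^(j-i) * (j.choose i : ℚ)
                * ((4*(i:ℚ)+1)^n + (4*(i:ℚ)+3)^n)) := by rw [inner_m]
        _ = (-1:ℚ)^j * ((j:ℚ)+1)^k * ((-1:ℚ)^n
            * ∑ i ∈ range (j+1), (-1:ℚ)^(j-i) * (j.choose i : ℚ)
                * ((4*(i:ℚ)+1)^n + (4*(i:ℚ)+3)^n)) := by ring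
    calc ∑ m ∈ Finset.range (n + 1),
          (n.choose m : ℚ) * 4 ^ m * ((-1) ^ (n - m) + (-3) ^ (n - m)) * polyBernoulliNeg k m
        = ∑ m ∈ range (n+1), ∑ j ∈ range (n+1), (n.choose m : ℚ) * 4^m * ((-1:ℚ)^(n-m) + (-3:ℚ)^(n-m))
            * ((-1:ℚ)^m * (-1:ℚ)^j * ((j:ℚ)+1)^k * st m j) := by
          refine Finset.sum_congr rfl fun m hm => ?_
          rw [hpB2 n k m hm, Finset.mul_sum]
      _ = ∑ j ∈ range (n+1), ∑ m ∈ range (n+1), (n.choose m : ℚ) * 4^m * ((-1:ℚ)^(n-m) + (-3:ℚ)^(n-m))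
            * ((-1:ℚ)^m * (-1:ℚ)^j * ((j:ℚ)+1)^k * st m j) := Finset.sum_comm
      _ = ∑ j ∈ range (n+1), (-1:ℚ)^j * ((j:ℚ)+1)^k * ((-1:ℚ)^n
            * ∑ i ∈ range (j+1), (-1:ℚ)^(j-i) * (j.choose i : ℚ)
                * ((4*(i:ℚ)+1)^n + (4*(i:ℚ)+3)^n)) := Finset.sum_congr rfl perj
      _ = ∑ j ∈ range (n+1), ∑ l ∈ range (k+1),
            ((-1:ℚ)^n * (-1:ℚ)^k) * ((-1:ℚ)^l * st k l)
              * ((-1:ℚ)^j * ((j+l).choose l : ℚ)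
                * ∑ i ∈ range (j+1), (-1:ℚ)^(j-i) * (j.choose i : ℚ)
                    * ((4*(i:ℚ)+1)^n + (4*(i:ℚ)+3)^n)) := by
          refine Finset.sum_congr rfl fun j _ => ?_
          rw [hj1k k j, Finset.mul_sum, Finset.mul_sum, Finset.sum_mul]
          refine Finset.sum_congr rfl fun l _ => ?_
          ring
      _ = ∑ l ∈ range (k+1), ∑ j ∈ range (n+1),
            ((-1:ℚ)^n * (-1:ℚ)^k) * ((-1:ℚ)^l * st k l)
              * ((-1:ℚ)^j * ((j+l).choose l : ℚ)
                * ∑ i ∈ range (j+1), (-1:ℚ)^(j-i) * (j.choose i : ℚ)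
                    * ((4*(i:ℚ)+1)^n + (4*(i:ℚ)+3)^n)) := Finset.sum_comm
      _ = ∑ l ∈ range (k+1), ((-1:ℚ)^n * (-1:ℚ)^k) * ((-1:ℚ)^l * st k l)
            * ((-1:ℚ)^n * ((4*(l:ℚ)+3)^n + (4*(l:ℚ)+1)^n)) := by
          refine Finset.sum_congr rfl fun l _ => ?_
          rw [← Finset.mul_sum, perl n l]
      _ = (-1:ℚ)^k * ∑ l ∈ range (k+1), (-1:ℚ)^l * st k l
            * ((4*(l:ℚ)+3)^n + (4*(l:ℚ)+1)^n) := by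
          rw [Finset.mul_sum]
          refine Finset.sum_congr rfl fun l _ => ?_
          linear_combination ((-1:ℚ)^k * ((-1:ℚ)^l * st k l) * ((4*(l:ℚ)+3)^n + (4*(l:ℚ)+1)^n)) * sq1 n
  rw [key]
  unfold polyEulerSecondNeg
  have hcf : ∑ l ∈ Finset.range (k + 1),
      (-1:ℚ) ^ l * (l.factorial : ℚ) * stirling2 k l *
        ((4 * (l : ℚ) + 3) ^ n + (4 * (l : ℚ) + 1) ^ n)
      = ∑ l ∈ range (k+1), (-1:ℚ)^l * st k l * ((4*(l:ℚ)+3)^n + (4*(l:ℚ)+1)^n) := by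
    refine Finset.sum_congr rfl fun l _ => ?_
    calc (-1:ℚ)^l * (l.factorial : ℚ) * stirling2 k l * ((4*(l:ℚ)+3)^n + (4*(l:ℚ)+1)^n)
        = (-1:ℚ)^l * ((l.factorial : ℚ) * stirling2 k l) * ((4*(l:ℚ)+3)^n + (4*(l:ℚ)+1)^n) := by ring
      _ = (-1:ℚ)^l * st k l * ((4*(l:ℚ)+3)^n + (4*(l:ℚ)+1)^n) := by rw [fact_st]
  rw [hcf]
  ring
end

section
/- For every nonnegative integer k: Ê₀^{(−k)} = 1, Ê₁^{(−k)} = 2^{k+2} − 2, Ê₂^{(−k)} = 32·3^k − 2^{k+5} + 5, and Ê₃^{(−k)} = 384·4^k − 576·3^k + 220·2^k − 14. -/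
def bsum (k j : ℕ) : ℚ :=
  ∑ i ∈ Finset.range (j + 1), (-1) ^ i * (j.choose i : ℚ) * (i : ℚ) ^ k

lemma bsum_zero (j : ℕ) (hj : j ≠ 0) : bsum 0 j = 0 := by
  have h := Int.alternating_sum_range_choose (n := j)
  rw [if_neg hj] at h
  unfold bsum
  have : ((∑ i ∈ Finset.range (j + 1), (-1) ^ i * (j.choose i : ℤ) : ℤ) : ℚ) = 0 := by
    rw [h]; norm_num
  push_cast at this
  simpa using this


lemma bsum_succ_right (k m : ℕ) :
    bsum k (m+1) = bsum k m
      - ∑ t ∈ Finset.range (m+1), (-1) ^ t * (m.choose t : ℚ) * ((t:ℚ)+1) ^ k := by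
  have h1 : bsum k m = ∑ i ∈ Finset.range (m+2), (-1:ℚ)^i * (m.choose i : ℚ) * (i:ℚ)^k := by
    unfold bsum
    rw [Finset.sum_range_succ _ (m+1)]
    simp
  rw [h1]
  unfold bsum
  rw [Finset.sum_range_succ' _ (m+1),
    Finset.sum_range_succ' (fun i => (-1:ℚ)^i * (m.choose i : ℚ) * (i:ℚ)^k) (m+1),
    eq_sub_iff_add_eq]
  have key : (∑ t ∈ Finset.range (m+1), (-1:ℚ) ^ (t+1) * ((m+1).choose (t+1) : ℚ) * ((t+1:ℕ):ℚ) ^ k)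
      + ∑ t ∈ Finset.range (m+1), (-1:ℚ) ^ t * (m.choose t : ℚ) * ((t:ℚ)+1) ^ k
      = ∑ t ∈ Finset.range (m+1), (-1:ℚ) ^ (t+1) * (m.choose (t+1) : ℚ) * ((t+1:ℕ):ℚ) ^ k := by
    rw [← Finset.sum_add_distrib]
    refine Finset.sum_congr rfl fun t _ => ?_
    rw [Nat.choose_succ_succ]
    push_cast
    ring
  push_cast at key ⊢
  simp only [Nat.choose_zero_right, Nat.cast_one, pow_zero, one_mul] at *
  linarith [key]

lemma bsum_rec (k m : ℕ) :
    bsum (k+1) (m+1) = ((m:ℚ)+1) * (bsum k (m+1) - bsum k m) := by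
  rw [bsum_succ_right k m]
  have hS : bsum k m - (∑ t ∈ Finset.range (m+1), (-1:ℚ)^t * (m.choose t : ℚ) * ((t:ℚ)+1)^k) - bsum k m
      = ∑ t ∈ Finset.range (m+1), -((-1:ℚ)^t * (m.choose t : ℚ) * ((t:ℚ)+1)^k) := by
    rw [Finset.sum_neg_distrib]; ring
  rw [hS, Finset.mul_sum]
  unfold bsum
  rw [Finset.sum_range_succ' _ (m+1)]
  have h0 : ((-1:ℚ))^0 * (((m+1).choose 0 : ℕ) : ℚ) * ((0:ℕ):ℚ)^(k+1) = 0 := by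
    norm_num
  rw [h0, add_zero]
  refine Finset.sum_congr rfl fun t _ => ?_
  have hc : ((m:ℚ)+1) * (m.choose t : ℚ) = (((m+1).choose (t+1) : ℕ) : ℚ) * ((t:ℚ)+1) := by
    exact_mod_cast congrArg (Nat.cast : ℕ → ℚ) (Nat.add_one_mul_choose_eq m t)
  push_cast
  linear_combination ((-1:ℚ)^t * ((t:ℚ)+1)^k) * hc

lemma bsum_eq_zero : ∀ k j : ℕ, k < j → bsum k j = 0 := by
  intro k
  induction k with
  | zero => intro j hj; exact bsum_zero j (by omega)
  | succ k ih =>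
    intro j hj
    obtain ⟨m, rfl⟩ : ∃ m, j = m + 1 := ⟨j - 1, by omega⟩
    rw [bsum_rec, ih (m+1) (by omega), ih m (by omega)]
    ring

def W (r k : ℕ) : ℚ := ∑ l ∈ Finset.range (k+1), bsum k l * (l:ℚ)^r

lemma W_step (r k : ℕ) :
    W r (k+1) = ∑ l ∈ Finset.range (k+1), bsum k l * ((l:ℚ)^(r+1) - ((l:ℚ)+1)^(r+1)) := by
  unfold W
  rw [Finset.sum_range_succ' _ (k+1)]
  have h0 : bsum (k+1) 0 * ((0:ℕ):ℚ)^r = 0 := by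
    unfold bsum; simp
  rw [h0, add_zero]
  have hterm : ∀ m ∈ Finset.range (k+1), bsum (k+1) (m+1) * ((m+1:ℕ):ℚ)^r
      = bsum k (m+1) * ((m:ℚ)+1)^(r+1) - bsum k m * ((m:ℚ)+1)^(r+1) := by
    intro m _
    rw [bsum_rec]
    push_cast
    ring
  rw [Finset.sum_congr rfl hterm, Finset.sum_sub_distrib]
  have h1 : ∑ m ∈ Finset.range (k+1), bsum k (m+1) * ((m:ℚ)+1)^(r+1)
      = ∑ l ∈ Finset.range (k+1), bsum k l * (l:ℚ)^(r+1) := by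
    have e1 := Finset.sum_range_succ' (fun l => bsum k l * (l:ℚ)^(r+1)) (k+1)
    rw [Finset.sum_range_succ (fun l => bsum k l * (l:ℚ)^(r+1)) (k+1),
      bsum_eq_zero k (k+1) (by omega)] at e1
    simp only [zero_mul, add_zero, Nat.cast_zero, zero_pow (by omega : r+1 ≠ 0), mul_zero] at e1
    push_cast at e1
    linarith [e1]
  rw [h1, ← Finset.sum_sub_distrib]
  exact Finset.sum_congr rfl fun l _ => by ring

lemma combo (k : ℕ) (a b c d : ℚ) :
    ∑ l ∈ Finset.range (k+1), bsum k l * (a + b*(l:ℚ) + c*(l:ℚ)^2 + d*(l:ℚ)^3)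
      = a * W 0 k + b * W 1 k + c * W 2 k + d * W 3 k := by
  simp only [W, Finset.mul_sum]
  rw [← Finset.sum_add_distrib, ← Finset.sum_add_distrib, ← Finset.sum_add_distrib]
  exact Finset.sum_congr rfl fun l _ => by ring

lemma W0 (k : ℕ) : W 0 k = (-1)^k := by
  induction k with
  | zero => norm_num [W, bsum]
  | succ k ih =>
    rw [W_step]
    have : ∀ l ∈ Finset.range (k+1), bsum k l * ((l:ℚ)^(0+1) - ((l:ℚ)+1)^(0+1))
        = -(bsum k l * (l:ℚ)^0) := fun l _ => by ring
    rw [Finset.sum_congr rfl this, Finset.sum_neg_distrib]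
    have : ∑ l ∈ Finset.range (k+1), bsum k l * (l:ℚ)^0 = W 0 k := rfl
    rw [this, ih]; ring

lemma W1 (k : ℕ) : W 1 k = (-1)^k * (2^k - 1) := by
  induction k with
  | zero => norm_num [W, bsum]
  | succ k ih =>
    rw [W_step]
    have : ∀ l ∈ Finset.range (k+1), bsum k l * ((l:ℚ)^(1+1) - ((l:ℚ)+1)^(1+1))
        = bsum k l * ((-1) + (-2)*(l:ℚ) + 0*(l:ℚ)^2 + 0*(l:ℚ)^3) := fun l _ => by ring
    rw [Finset.sum_congr rfl this, combo, W0, ih]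
    ring

lemma W2 (k : ℕ) : W 2 k = (-1)^k * (2*3^k - 3*2^k + 1) := by
  induction k with
  | zero => norm_num [W, bsum]
  | succ k ih =>
    rw [W_step]
    have : ∀ l ∈ Finset.range (k+1), bsum k l * ((l:ℚ)^(2+1) - ((l:ℚ)+1)^(2+1))
        = bsum k l * ((-1) + (-3)*(l:ℚ) + (-3)*(l:ℚ)^2 + 0*(l:ℚ)^3) := fun l _ => by ring
    rw [Finset.sum_congr rfl this, combo, W0, W1, ih]
    ring

lemma W3 (k : ℕ) : W 3 k = (-1)^k * (6*4^k - 12*3^k + 7*2^k - 1) := by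
  induction k with
  | zero => norm_num [W, bsum]
  | succ k ih =>
    rw [W_step]
    have : ∀ l ∈ Finset.range (k+1), bsum k l * ((l:ℚ)^(3+1) - ((l:ℚ)+1)^(3+1))
        = bsum k l * ((-1) + (-4)*(l:ℚ) + (-6)*(l:ℚ)^2 + (-4)*(l:ℚ)^3) := fun l _ => by ring
    rw [Finset.sum_congr rfl this, combo, W0, W1, W2, ih]
    ring

lemma stirling2_eq (k j : ℕ) :
    stirling2 k j = (1 / j.factorial) * ((-1)^j * bsum k j) := by
  unfold stirling2 bsum
  congr 1
  rw [Finset.mul_sum]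
  refine Finset.sum_congr rfl fun i hi => ?_
  rw [Finset.mem_range] at hi
  obtain ⟨d, rfl⟩ := Nat.exists_eq_add_of_le (Nat.lt_succ_iff.mp hi)
  rw [show i + d - i = d from by omega, pow_add]
  have h2 : ((-1:ℚ))^i * (-1)^i = 1 := by
    rw [← pow_add, ← two_mul, pow_mul]; norm_num
  linear_combination (-((-1:ℚ)^d * ((i+d).choose i : ℚ) * (i:ℚ)^k)) * h2

lemma pes_eq (n k : ℕ) :
    polyEulerSecondNeg n k = ((-1)^k/2) *
      ∑ l ∈ Finset.range (k+1), bsum k l * ((4*(l:ℚ)+3)^n + (4*(l:ℚ)+1)^n) := by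
  unfold polyEulerSecondNeg
  congr 1
  refine Finset.sum_congr rfl fun l _ => ?_
  rw [stirling2_eq]
  have hf : (l.factorial : ℚ) ≠ 0 := by
    exact_mod_cast l.factorial_ne_zero
  have h2 : ((-1:ℚ))^l * (-1)^l = 1 := by
    rw [← pow_add, ← two_mul, pow_mul]; norm_num
  field_simp
  linear_combination (bsum k l) * h2

theorem polyEulerSecondNeg_small_n (k : ℕ) :
    polyEulerSecondNeg 0 k = 1 ∧
    polyEulerSecondNeg 1 k = 2 ^ (k + 2) - 2 ∧
    polyEulerSecondNeg 2 k = 32 * 3 ^ k - 2 ^ (k + 5) + 5 ∧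
    polyEulerSecondNeg 3 k = 384 * 4 ^ k - 576 * 3 ^ k + 220 * 2 ^ k - 14 := by
  have hk : ((-1:ℚ))^k * (-1)^k = 1 := by
    rw [← pow_add, ← two_mul, pow_mul]; norm_num
  refine ⟨?_, ?_, ?_, ?_⟩
  · rw [pes_eq]
    have : ∀ l ∈ Finset.range (k+1), bsum k l * ((4*(l:ℚ)+3)^0 + (4*(l:ℚ)+1)^0)
        = bsum k l * (2 + 0*(l:ℚ) + 0*(l:ℚ)^2 + 0*(l:ℚ)^3) := fun l _ => by ring
    rw [Finset.sum_congr rfl this, combo, W0, W1, W2, W3]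
    linear_combination hk
  · rw [pes_eq]
    have : ∀ l ∈ Finset.range (k+1), bsum k l * ((4*(l:ℚ)+3)^1 + (4*(l:ℚ)+1)^1)
        = bsum k l * (4 + 8*(l:ℚ) + 0*(l:ℚ)^2 + 0*(l:ℚ)^3) := fun l _ => by ring
    rw [Finset.sum_congr rfl this, combo, W0, W1, W2, W3]
    linear_combination (4*(2:ℚ)^k - 2) * hk
  · rw [pes_eq]
    have : ∀ l ∈ Finset.range (k+1), bsum k l * ((4*(l:ℚ)+3)^2 + (4*(l:ℚ)+1)^2)
        = bsum k l * (10 + 32*(l:ℚ) + 32*(l:ℚ)^2 + 0*(l:ℚ)^3) := fun l _ => by ring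
    rw [Finset.sum_congr rfl this, combo, W0, W1, W2, W3]
    linear_combination (32*(3:ℚ)^k - 32*2^k + 5) * hk
  · rw [pes_eq]
    have : ∀ l ∈ Finset.range (k+1), bsum k l * ((4*(l:ℚ)+3)^3 + (4*(l:ℚ)+1)^3)
        = bsum k l * (28 + 120*(l:ℚ) + 192*(l:ℚ)^2 + 128*(l:ℚ)^3) := fun l _ => by ring
    rw [Finset.sum_congr rfl this, combo, W0, W1, W2, W3]
    linear_combination (384*(4:ℚ)^k - 576*3^k + 220*2^k - 14) * hk
end

section
/- For all nonnegative integers n and k, ∑_{m=0}^{n} C(n,m) · ((2 − E_{n−m})/4ⁿ) · Ê_m^{(−k)} = ∑_{m=0}^{k} C(k,m) · ((2 − E_{k−m})/4^k) · Ê_m^{(−n)} (a duality formula for poly-Euler numbers of the second kind with negative index). -/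
open Finset

/-- `f n p = p! S(n,p)` explicit alternating sum. -/
def pf (n p : ℕ) : ℚ :=
  ∑ i ∈ Finset.range (p + 1), (-1) ^ (p - i) * (p.choose i : ℚ) * (i : ℚ) ^ n

lemma fact_mul_stirling2 (k l : ℕ) : (l.factorial : ℚ) * stirling2 k l = pf k l := by
  have h : (l.factorial : ℚ) ≠ 0 := by
    exact_mod_cast l.factorial_ne_zero
  unfold stirling2 pf
  field_simp

lemma pf_zero_succ (p : ℕ) : pf 0 (p + 1) = 0 := by
  unfold pf
  have : ∀ i ∈ Finset.range (p + 2),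
      (-1 : ℚ) ^ (p + 1 - i) * ((p+1).choose i : ℚ) * (i : ℚ) ^ 0
        = (-1) ^ (p + 1) * ((-1) ^ i * ((p+1).choose i : ℚ)) := by
    intro i hi
    rw [Finset.mem_range] at hi
    have hle : i ≤ p + 1 := by omega
    have : (-1 : ℚ) ^ (p + 1 - i) * (-1) ^ i = (-1) ^ (p + 1) := by
      rw [← pow_add]; congr 1; omega
    have hsq : ((-1 : ℚ)) ^ i * (-1) ^ i = 1 := by
      rw [← pow_add, ← two_mul, pow_mul]; norm_num
    rw [pow_zero, mul_one]
    linear_combination ((-1 : ℚ) ^ i * ((p+1).choose i : ℚ)) * this -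
      ((-1 : ℚ) ^ (p + 1 - i) * ((p+1).choose i : ℚ)) * hsq
  rw [Finset.sum_congr rfl this, ← Finset.mul_sum]
  have := Int.alternating_sum_range_choose_of_ne (n := p + 1) (by omega)
  have hQ : ∑ i ∈ Finset.range (p + 2), ((-1 : ℚ)) ^ i * ((p+1).choose i : ℚ) = 0 := by
    exact_mod_cast congrArg (fun z : ℤ => (z : ℚ)) this
  rw [hQ, mul_zero]

lemma pf_succ (n p : ℕ) : pf (n + 1) (p + 1) = ((p : ℚ) + 1) * (pf n (p + 1) + pf n p) := by
  have hp : pf n p = ∑ i ∈ Finset.range (p + 2), (-1 : ℚ) ^ (p - i) * (p.choose i : ℚ) * (i : ℚ) ^ n := by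
    unfold pf
    rw [Finset.sum_range_succ (n := p + 1)]
    simp [Nat.choose_eq_zero_of_lt]
  rw [hp]
  unfold pf
  rw [← Finset.sum_add_distrib, Finset.mul_sum]
  apply Finset.sum_congr rfl
  intro i hi
  rw [Finset.mem_range] at hi
  rcases Nat.eq_zero_or_pos i with h0 | h1
  · subst h0
    simp [pow_succ]
  · rcases Nat.lt_or_ge i (p + 1) with h2 | h2
    · have hsub : p + 1 - i = (p - i) + 1 := by omega
      obtain ⟨j, rfl⟩ : ∃ j, i = j + 1 := ⟨i - 1, by omega⟩
      have hC : ((p + 1).choose (j + 1) : ℚ) = (p.choose (j + 1) : ℚ) + (p.choose j : ℚ) := by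
        rw [Nat.choose_succ_succ]
        push_cast
        ring
      have hkey : ((p : ℚ) + 1) * (p.choose j : ℚ) = ((p + 1).choose (j + 1) : ℚ) * ((j : ℚ) + 1) := by
        have := Nat.add_one_mul_choose_eq p j
        have := congrArg (fun z : ℕ => (z : ℚ)) this
        push_cast at this
        linarith [this]
      rw [hsub]
      push_cast
      linear_combination ((-1 : ℚ) ^ (p - (j + 1)) * ((j : ℚ) + 1) ^ n) * hkey +
        (((p : ℚ) + 1) * (-1 : ℚ) ^ (p - (j + 1)) * ((j : ℚ) + 1) ^ n) * hC
    · have hip : i = p + 1 := by omega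
      subst hip
      have h3 : p - (p + 1) = 0 := by omega
      simp [Nat.choose_eq_zero_of_lt, h3]
      push_cast
      ring

lemma pf_eq_zero : ∀ n p : ℕ, n < p → pf n p = 0 := by
  intro n
  induction n with
  | zero =>
    intro p hp
    obtain ⟨q, rfl⟩ : ∃ q, p = q + 1 := ⟨p - 1, by omega⟩
    exact pf_zero_succ q
  | succ n ih =>
    intro p hp
    obtain ⟨q, rfl⟩ : ∃ q, p = q + 1 := ⟨p - 1, by omega⟩
    rw [pf_succ]
    rw [ih (q + 1) (by omega), ih q (by omega)]
    ring

lemma pf_zero_zero : pf 0 0 = 1 := by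
  unfold pf
  simp

lemma pf_succ_zero (n : ℕ) : pf (n + 1) 0 = 0 := by
  unfold pf
  simp

lemma shift_sum (G : ℕ → ℚ) (n : ℕ) (h0 : G 0 = 0) (hn : G (n + 1) = 0) :
    ∑ p ∈ Finset.range (n + 1), G (p + 1) = ∑ p ∈ Finset.range (n + 1), G p := by
  have h1 := Finset.sum_range_succ' G (n + 1)
  have h2 := Finset.sum_range_succ G (n + 1)
  rw [h0, hn] at *
  linarith

lemma T_eq (n q : ℕ) :
    ∑ p ∈ Finset.range (n + 1), ((p + q).choose p : ℚ) * (-1) ^ (n + p) * pf n p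
      = ((q : ℚ) + 1) ^ n := by
  induction n with
  | zero => simp [pf_zero_zero]
  | succ n ih =>
    rw [Finset.sum_range_succ']
    rw [pf_succ_zero]
    simp only [mul_zero, add_zero]
    have hkey : ∀ p : ℕ, ((p : ℚ) + 1 + (q : ℚ)) * ((p + q).choose p : ℚ)
        = (((p + 1) + q).choose (p + 1) : ℚ) * ((p : ℚ) + 1) := by
      intro p
      have h := Nat.add_one_mul_choose_eq (p + q) p
      have h2 := congrArg (fun z : ℕ => (z : ℚ)) h
      push_cast at h2
      rw [show p + 1 + q = p + q + 1 by omega]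
      push_cast
      linarith [h2]
    have step : ∀ p ∈ Finset.range (n + 1),
        ((p + 1 + q).choose (p + 1) : ℚ) * (-1) ^ (n + 1 + (p + 1)) * pf (n + 1) (p + 1)
          = -(((p + 1 : ℕ) : ℚ) * (((p + 1) + q).choose (p + 1) : ℚ) * (-1) ^ (n + (p + 1)) * pf n (p + 1))
            + (((q : ℚ) + 1) * (((p + q).choose p : ℚ) * (-1) ^ (n + p) * pf n p)
              + ((p : ℕ) : ℚ) * ((p + q).choose p : ℚ) * (-1) ^ (n + p) * pf n p) := by
      intro p hp
      rw [pf_succ]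
      push_cast
      linear_combination (-((-1 : ℚ) ^ (n + p)) * pf n p) * hkey p
    rw [Finset.sum_congr rfl step, Finset.sum_add_distrib]
    have h0 : ((0 : ℕ) : ℚ) * (((0 + q).choose 0 : ℕ) : ℚ) * (-1) ^ (n + 0) * pf n 0 = 0 := by
      norm_num
    have hn : ((n + 1 : ℕ) : ℚ) * (((n + 1 + q).choose (n + 1) : ℕ) : ℚ) * (-1) ^ (n + (n + 1))
        * pf n (n + 1) = 0 := by
      rw [pf_eq_zero n (n + 1) (by omega)]; ring
    have hG : (∑ p ∈ Finset.range (n + 1),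
          ((p + 1 : ℕ) : ℚ) * (((p + 1) + q).choose (p + 1) : ℚ) * (-1) ^ (n + (p + 1)) * pf n (p + 1))
        = ∑ p ∈ Finset.range (n + 1),
          ((p : ℕ) : ℚ) * ((p + q).choose p : ℚ) * (-1) ^ (n + p) * pf n p :=
      shift_sum (fun p => ((p : ℕ) : ℚ) * ((p + q).choose p : ℚ) * (-1) ^ (n + p) * pf n p) n h0 hn
    rw [Finset.sum_neg_distrib, hG, Finset.sum_add_distrib, ← Finset.mul_sum, ih]
    ring

section Euler
variable (E : ℕ → ℚ) (hE0 : E 0 = 1) (hEodd : ∀ m : ℕ, E (2 * m + 1) = 0)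
  (hErec : ∀ m : ℕ, 1 ≤ m →
      ∑ j ∈ Finset.range (m + 1), ((2 * m).choose (2 * j) : ℚ) * E (2 * j) = 0)

include hE0 hEodd hErec

lemma euler_base (r : ℕ) :
    ∑ v ∈ Finset.range (r + 1), (r.choose v : ℚ) * E v * (1 + (-1) ^ (r - v))
      = if r = 0 then 2 else 0 := by
  rcases Nat.even_or_odd r with ⟨m, hm⟩ | ⟨m, hm⟩
  · subst hm
    rcases Nat.eq_zero_or_pos m with rfl | hm1
    · simp [hE0]
      norm_num
    · rw [if_neg (by omega)]
      have hsub : Finset.image (fun j => 2 * j) (Finset.range (m + 1)) ⊆ Finset.range (m + m + 1) := by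
        intro v hv
        simp only [Finset.mem_image, Finset.mem_range] at hv ⊢
        omega
      rw [← Finset.sum_subset hsub ?vanish]
      · rw [Finset.sum_image ?inj]
        · have : ∀ j ∈ Finset.range (m + 1),
              ((m + m).choose (2 * j) : ℚ) * E (2 * j) * (1 + (-1) ^ (m + m - 2 * j))
                = 2 * (((2 * m).choose (2 * j) : ℚ) * E (2 * j)) := by
            intro j hj
            rw [Finset.mem_range] at hj
            have he : (-1 : ℚ) ^ (m + m - 2 * j) = 1 := by
              have : m + m - 2 * j = 2 * (m - j) := by omega
              rw [this, pow_mul]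
              norm_num
            rw [he, show m + m = 2 * m by omega]
            ring
          rw [Finset.sum_congr rfl this, ← Finset.mul_sum, hErec m hm1, mul_zero]
        · intro a _ b _ hab
          simp only at hab
          omega
      · intro v hv hv2
        simp only [Finset.mem_image, Finset.mem_range] at hv hv2
        push_neg at hv2
        have hodd : ∃ t, v = 2 * t + 1 := by
          rcases Nat.even_or_odd v with ⟨t, ht⟩ | ⟨t, ht⟩
          · exact absurd ht (by have := hv2 t (by omega); omega)
          · exact ⟨t, by omega⟩
        obtain ⟨t, rfl⟩ := hodd
        rw [hEodd t]
        ring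
  · subst hm
    rw [if_neg (by omega)]
    apply Finset.sum_eq_zero
    intro v hv
    rw [Finset.mem_range] at hv
    rcases Nat.even_or_odd v with ⟨t, ht⟩ | ⟨t, ht⟩
    · have hodd : Odd (2 * m + 1 - v) := by
        refine ⟨m - t, by omega⟩
      rw [Odd.neg_one_pow hodd]
      ring
    · rw [show v = 2 * t + 1 by omega, hEodd t]
      ring

lemma euler_inner (n s : ℕ) (hs : s ≤ n) (c : ℚ) :
    ∑ m ∈ Finset.range (n + 1),
        (n.choose m : ℚ) * E (n - m) * ((m.choose s : ℚ) * c ^ s * (1 + (-1) ^ (m - s)))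
      = if s = n then 2 * c ^ n else 0 := by
  have hsub : Finset.Ico s (n + 1) ⊆ Finset.range (n + 1) := by
    intro x hx
    rw [Finset.mem_Ico] at hx
    rw [Finset.mem_range]
    omega
  have hvan : ∀ m ∈ Finset.range (n + 1), m ∉ Finset.Ico s (n + 1) →
      (n.choose m : ℚ) * E (n - m) * ((m.choose s : ℚ) * c ^ s * (1 + (-1) ^ (m - s))) = 0 := by
    intro m hm hm2
    rw [Finset.mem_range] at hm
    rw [Finset.mem_Ico] at hm2
    rw [Nat.choose_eq_zero_of_lt (show m < s by omega)]
    push_cast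
    ring
  rw [← Finset.sum_subset hsub hvan, Finset.sum_Ico_eq_sum_range]
  have hterm : ∀ u ∈ Finset.range (n + 1 - s),
      (n.choose (s + u) : ℚ) * E (n - (s + u)) *
          (((s + u).choose s : ℚ) * c ^ s * (1 + (-1) ^ (s + u - s)))
        = ((n.choose s : ℚ) * c ^ s) *
            (((n - s).choose u : ℚ) * E ((n - s) - u) * (1 + (-1) ^ u)) := by
    intro u hu
    rw [Finset.mem_range] at hu
    have hmul := Nat.choose_mul (n := n) (show s ≤ s + u by omega)
    have hmulQ := congrArg (fun z : ℕ => (z : ℚ)) hmul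
    push_cast at hmulQ
    rw [show s + u - s = u by omega] at hmulQ ⊢
    rw [show n - (s + u) = (n - s) - u by omega]
    linear_combination (E ((n - s) - u) * c ^ s * (1 + (-1 : ℚ) ^ u)) * hmulQ
  rw [Finset.sum_congr rfl hterm, ← Finset.mul_sum]
  have hreflect : ∑ u ∈ Finset.range ((n - s) + 1),
      ((n - s).choose u : ℚ) * E ((n - s) - u) * (1 + (-1) ^ u)
      = ∑ v ∈ Finset.range ((n - s) + 1),
          ((n - s).choose v : ℚ) * E v * (1 + (-1) ^ ((n - s) - v)) := by
    rw [← Finset.sum_range_reflect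
      (fun v => ((n - s).choose v : ℚ) * E v * (1 + (-1) ^ ((n - s) - v))) ((n - s) + 1)]
    apply Finset.sum_congr rfl
    intro u hu
    rw [Finset.mem_range] at hu
    rw [show (n - s) + 1 - 1 - u = (n - s) - u by omega,
      Nat.choose_symm (show u ≤ n - s by omega),
      show (n - s) - ((n - s) - u) = u by omega]
  rw [show n + 1 - s = (n - s) + 1 by omega, hreflect,
    euler_base E hE0 hEodd hErec (n - s)]
  rcases eq_or_ne s n with rfl | hne
  · rw [if_pos (by omega), if_pos rfl, Nat.choose_self]
    push_cast
    ring
  · rw [if_neg (by omega), if_neg hne]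
    ring

lemma euler_key (n : ℕ) (c : ℚ) :
    ∑ m ∈ Finset.range (n + 1), (n.choose m : ℚ) * E (n - m) * ((c + 1) ^ m + (c - 1) ^ m)
      = 2 * c ^ n := by
  have hston : ∀ m ∈ Finset.range (n + 1), (n.choose m : ℚ) * E (n - m) * ((c + 1) ^ m + (c - 1) ^ m)
      = ∑ s ∈ Finset.range (n + 1),
          (n.choose m : ℚ) * E (n - m) * ((m.choose s : ℚ) * c ^ s * (1 + (-1) ^ (m - s))) := by
    intro m hm
    rw [Finset.mem_range] at hm
    have h1 : (c + 1) ^ m = ∑ s ∈ Finset.range (m + 1), c ^ s * (1 : ℚ) ^ (m - s) * (m.choose s) :=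
      add_pow c 1 m
    have h2 : (c - 1) ^ m = ∑ s ∈ Finset.range (m + 1), c ^ s * (-1 : ℚ) ^ (m - s) * (m.choose s) := by
      have := add_pow c (-1 : ℚ) m
      rw [show c + (-1 : ℚ) = c - 1 by ring] at this
      exact this
    have h3 : (c + 1) ^ m + (c - 1) ^ m = ∑ s ∈ Finset.range (n + 1),
        ((m.choose s : ℚ) * c ^ s * (1 + (-1) ^ (m - s))) := by
      rw [h1, h2, ← Finset.sum_add_distrib]
      rw [Finset.sum_subset (Finset.range_subset_range.mpr (show m + 1 ≤ n + 1 by omega)) ?_]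
      · apply Finset.sum_congr rfl
        intro s _
        rw [one_pow]
        ring
      · intro s hs hs2
        rw [Finset.mem_range] at hs hs2
        rw [Nat.choose_eq_zero_of_lt (show m < s by omega)]
        push_cast
        ring
    rw [h3, Finset.mul_sum]
  rw [Finset.sum_congr rfl hston, Finset.sum_comm]
  have hfin : ∀ s ∈ Finset.range (n + 1),
      ∑ m ∈ Finset.range (n + 1),
        (n.choose m : ℚ) * E (n - m) * ((m.choose s : ℚ) * c ^ s * (1 + (-1) ^ (m - s)))
      = if s = n then 2 * c ^ n else 0 := by
    intro s hs
    rw [Finset.mem_range] at hs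
    exact euler_inner E hE0 hEodd hErec n s (by omega) c
  rw [Finset.sum_congr rfl hfin, Finset.sum_ite_eq' (Finset.range (n + 1)) n fun _ => 2 * c ^ n,
    if_pos (Finset.self_mem_range_succ n)]

end Euler

lemma poly_eq (m k : ℕ) : polyEulerSecondNeg m k
    = ((-1) ^ k / 2) * ∑ l ∈ Finset.range (k + 1),
        (-1) ^ l * pf k l * ((4 * (l : ℚ) + 3) ^ m + (4 * (l : ℚ) + 1) ^ m) := by
  unfold polyEulerSecondNeg
  congr 1
  apply Finset.sum_congr rfl
  intro l _
  linear_combination (((4 * (l : ℚ) + 3) ^ m + (4 * (l : ℚ) + 1) ^ m) * (-1 : ℚ) ^ l) *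
    fact_mul_stirling2 k l

section Main
variable (E : ℕ → ℚ) (hE0 : E 0 = 1) (hEodd : ∀ m : ℕ, E (2 * m + 1) = 0)
  (hErec : ∀ m : ℕ, 1 ≤ m →
      ∑ j ∈ Finset.range (m + 1), ((2 * m).choose (2 * j) : ℚ) * E (2 * j) = 0)

include hE0 hEodd hErec

lemma main_eq (n k : ℕ) :
    ∑ m ∈ Finset.range (n + 1),
        (n.choose m : ℚ) * ((2 - E (n - m)) / 4 ^ n) * polyEulerSecondNeg m k
      = ∑ l ∈ Finset.range (k + 1), (-1) ^ (k + l) * pf k l * ((l : ℚ) + 1) ^ n := by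
  have step1 : ∀ m ∈ Finset.range (n + 1),
      (n.choose m : ℚ) * ((2 - E (n - m)) / 4 ^ n) * polyEulerSecondNeg m k
        = ∑ l ∈ Finset.range (k + 1),
            ((-1) ^ (k + l) * pf k l / (2 * 4 ^ n)) *
              ((n.choose m : ℚ) * (2 - E (n - m)) *
                ((4 * (l : ℚ) + 3) ^ m + (4 * (l : ℚ) + 1) ^ m)) := by
    intro m _
    rw [poly_eq m k, Finset.mul_sum, Finset.mul_sum]
    apply Finset.sum_congr rfl
    intro l _
    ring
  rw [Finset.sum_congr rfl step1, Finset.sum_comm]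
  apply Finset.sum_congr rfl
  intro l _
  rw [← Finset.mul_sum]
  have hk := euler_key E hE0 hEodd hErec n (4 * (l : ℚ) + 2)
  rw [show (4 * (l : ℚ) + 2) + 1 = 4 * l + 3 by ring,
    show (4 * (l : ℚ) + 2) - 1 = 4 * l + 1 by ring] at hk
  have hb3 : ∑ m ∈ Finset.range (n + 1), (4 * (l : ℚ) + 3) ^ m * (n.choose m : ℚ)
      = (4 * (l : ℚ) + 4) ^ n := by
    have h := add_pow (4 * (l : ℚ) + 3) 1 n
    rw [show (4 * (l : ℚ) + 3) + 1 = 4 * l + 4 by ring] at h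
    rw [h]
    apply Finset.sum_congr rfl
    intro m _
    rw [one_pow, mul_one]
  have hb1 : ∑ m ∈ Finset.range (n + 1), (4 * (l : ℚ) + 1) ^ m * (n.choose m : ℚ)
      = (4 * (l : ℚ) + 2) ^ n := by
    have h := add_pow (4 * (l : ℚ) + 1) 1 n
    rw [show (4 * (l : ℚ) + 1) + 1 = 4 * l + 2 by ring] at h
    rw [h]
    apply Finset.sum_congr rfl
    intro m _
    rw [one_pow, mul_one]
  have expand : ∀ m ∈ Finset.range (n + 1),
      (n.choose m : ℚ) * (2 - E (n - m)) * ((4 * (l : ℚ) + 3) ^ m + (4 * (l : ℚ) + 1) ^ m)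
        = (2 * ((4 * (l : ℚ) + 3) ^ m * (n.choose m : ℚ))
            + 2 * ((4 * (l : ℚ) + 1) ^ m * (n.choose m : ℚ)))
          - (n.choose m : ℚ) * E (n - m) * ((4 * (l : ℚ) + 3) ^ m + (4 * (l : ℚ) + 1) ^ m) := by
    intro m _
    ring
  have hS : ∑ m ∈ Finset.range (n + 1),
      (n.choose m : ℚ) * (2 - E (n - m)) * ((4 * (l : ℚ) + 3) ^ m + (4 * (l : ℚ) + 1) ^ m)
        = 2 * (4 * (l : ℚ) + 4) ^ n := by
    rw [Finset.sum_congr rfl expand, Finset.sum_sub_distrib, Finset.sum_add_distrib,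
      ← Finset.mul_sum, ← Finset.mul_sum, hb3, hb1, hk]
    ring
  rw [hS, show (4 * (l : ℚ) + 4) ^ n = 4 ^ n * ((l : ℚ) + 1) ^ n by
    rw [show 4 * (l : ℚ) + 4 = 4 * ((l : ℚ) + 1) by ring, mul_pow]]
  have h4 : (4 : ℚ) ^ n ≠ 0 := by positivity
  field_simp

theorem duality (n k : ℕ) :
    ∑ m ∈ Finset.range (n + 1),
        (n.choose m : ℚ) * ((2 - E (n - m)) / 4 ^ n) * polyEulerSecondNeg m k =
      ∑ m ∈ Finset.range (k + 1),
        (k.choose m : ℚ) * ((2 - E (k - m)) / 4 ^ k) * polyEulerSecondNeg m n := by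
  rw [main_eq E hE0 hEodd hErec n k, main_eq E hE0 hEodd hErec k n]
  have expandL : ∀ l ∈ Finset.range (k + 1),
      (-1 : ℚ) ^ (k + l) * pf k l * ((l : ℚ) + 1) ^ n
        = ∑ p ∈ Finset.range (n + 1),
            (-1 : ℚ) ^ (k + l) * pf k l * (((p + l).choose p : ℚ) * (-1) ^ (n + p) * pf n p) := by
    intro l _
    rw [← Finset.mul_sum, T_eq n l]
  have expandR : ∀ p ∈ Finset.range (n + 1),
      (-1 : ℚ) ^ (n + p) * pf n p * ((p : ℚ) + 1) ^ k
        = ∑ l ∈ Finset.range (k + 1),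
            (-1 : ℚ) ^ (n + p) * pf n p * (((l + p).choose l : ℚ) * (-1) ^ (k + l) * pf k l) := by
    intro p _
    rw [← Finset.mul_sum, T_eq k p]
  rw [Finset.sum_congr rfl expandL, Finset.sum_congr rfl expandR, Finset.sum_comm]
  apply Finset.sum_congr rfl
  intro p _
  apply Finset.sum_congr rfl
  intro l _
  rw [show p + l = l + p from Nat.add_comm p l, Nat.choose_symm_add]
  ring

end Main

theorem polyEulerSecondNeg_duality (E : ℕ → ℚ) (hE0 : E 0 = 1)
    (hEodd : ∀ m : ℕ, E (2 * m + 1) = 0)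
    (hErec : ∀ m : ℕ, 1 ≤ m →
      ∑ j ∈ Finset.range (m + 1), ((2 * m).choose (2 * j) : ℚ) * E (2 * j) = 0)
    (n k : ℕ) :
    ∑ m ∈ Finset.range (n + 1),
        (n.choose m : ℚ) * ((2 - E (n - m)) / 4 ^ n) * polyEulerSecondNeg m k =
      ∑ m ∈ Finset.range (k + 1),
        (k.choose m : ℚ) * ((2 - E (k - m)) / 4 ^ k) * polyEulerSecondNeg m n :=
  duality E hE0 hEodd hErec n k
end

section
/- For every integer k and every integer n ≥ 0, B_n^{(k)} = ∑_{m=0}^{n} C(n,m) · ((2 − E_{n−m})/4ⁿ) · Ê_m^{(k)}, i.e., 4ⁿ · B_n^{(k)} = ∑_{m=0}^{n} C(n,m) · (2 − E_{n−m}) · Ê_m^{(k)}. -/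
/-- Poly-Bernoulli numbers: `B_m^{(k)} = ∑_{j=0}^{m} (-1)^{m-j} (j!/(j+1)^k) S(m,j)`,
for any integer index `k`. -/
def polyBernoulli (k : ℤ) (m : ℕ) : ℚ :=
  ∑ j ∈ Finset.range (m + 1),
    (-1) ^ (m - j) * ((j.factorial : ℚ) / ((j : ℚ) + 1) ^ k) * stirling2 m j

/-- Poly-Euler numbers of the second kind:
`Ê_n^{(k)} = (1/2) ∑_{m=0}^{n} C(n,m) 4^m ((-1)^{n-m} + (-3)^{n-m}) B_m^{(k)}`. -/
def polyEulerSecond (k : ℤ) (n : ℕ) : ℚ :=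
  (1 / 2) *
    ∑ m ∈ Finset.range (n + 1),
      (n.choose m : ℚ) * 4 ^ m * ((-1) ^ (n - m) + (-3) ^ (n - m)) * polyBernoulli k m

open Finset

/-- Sum of a function vanishing at odd arguments collapses to even indices. -/
lemma sum_even_collapse (g : ℕ → ℚ) (hg : ∀ j, ¬ Even j → g j = 0) (n : ℕ) :
    ∑ j ∈ range n, g j = ∑ i ∈ range ((n + 1) / 2), g (2 * i) := by
  induction n with
  | zero => simp
  | succ n ih =>
    rw [Finset.sum_range_succ, ih]
    by_cases h : Even n
    · obtain ⟨i, hi⟩ := h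
      have h1 : (n + 1 + 1) / 2 = (n + 1) / 2 + 1 := by omega
      have h2 : 2 * ((n + 1) / 2) = n := by omega
      rw [h1, Finset.sum_range_succ, h2]
    · have hn : n % 2 = 1 := Nat.not_even_iff.mp h
      have h1 : (n + 1 + 1) / 2 = (n + 1) / 2 := by omega
      rw [h1, hg n h, add_zero]

/-- Triangle sum swap. -/
lemma sum_triangle (f : ℕ → ℕ → ℚ) (N : ℕ) :
    ∑ j ∈ range (N + 1), ∑ i ∈ range (j + 1), f j i =
      ∑ i ∈ range (N + 1), ∑ r ∈ range (N + 1 - i), f (i + r) i := by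
  have h1 : ∀ j ∈ range (N + 1), ∑ i ∈ range (j + 1), f j i
      = ∑ i ∈ range (N + 1), if i ≤ j then f j i else 0 := by
    intro j hj
    rw [Finset.mem_range] at hj
    rw [← Finset.sum_subset (Finset.range_subset_range.mpr hj)
      (fun x _ hx => by rw [Finset.mem_range, not_lt] at hx; simp [Nat.lt_irrefl, if_neg (by omega : ¬ x ≤ j)])]
    exact Finset.sum_congr rfl fun i hi => by
      rw [Finset.mem_range] at hi; rw [if_pos (by omega)]
  rw [Finset.sum_congr rfl h1, Finset.sum_comm]
  refine Finset.sum_congr rfl fun i hi => ?_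
  rw [Finset.mem_range] at hi
  have h2 : ∑ j ∈ range (N + 1), (if i ≤ j then f j i else 0)
      = ∑ j ∈ Finset.Ico i (N + 1), f j i := by
    rw [Finset.range_eq_Ico, ← Finset.sum_subset
      (Finset.Ico_subset_Ico (Nat.zero_le i) le_rfl)
      (fun x hx hx2 => by
        rw [Finset.mem_Ico] at hx hx2
        rw [if_neg (by omega)])]
    exact Finset.sum_congr rfl fun j hj => by
      rw [Finset.mem_Ico] at hj; rw [if_pos hj.1]
  rw [h2, Finset.sum_Ico_eq_sum_range]

lemma binom3 (m : ℕ) :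
    ∑ r ∈ range (m + 1), (m.choose r : ℚ) * (-2) ^ (m - r) * (1 + (-1) ^ r) =
      (-1) ^ m + (-3) ^ m := by
  have h1 := add_pow (1 : ℚ) (-2) m
  have h2 := add_pow (-1 : ℚ) (-2) m
  norm_num at h1 h2
  rw [h1, h2, ← Finset.sum_add_distrib]
  exact Finset.sum_congr rfl fun r _ => by ring

lemma binomA (m : ℕ) :
    ∑ r ∈ range (m + 1), (m.choose r : ℚ) * ((-1) ^ r + (-3) ^ r) =
      (if m = 0 then 1 else 0) + (-2) ^ m := by
  have h1 := add_pow (-1 : ℚ) (1 : ℚ) m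
  have h2 := add_pow (-3 : ℚ) (1 : ℚ) m
  norm_num at h1 h2
  have h0 : ((0 : ℚ)) ^ m = if m = 0 then 1 else 0 := by
    rcases Nat.eq_zero_or_pos m with h | h
    · simp [h]
    · rw [if_neg (by omega), zero_pow (by omega)]
  rw [← h0, h1, h2, ← Finset.sum_add_distrib]
  exact Finset.sum_congr rfl fun r _ => by ring

section
variable (E : ℕ → ℚ) (hE0 : E 0 = 1)
    (hEodd : ∀ m : ℕ, E (2 * m + 1) = 0)
    (hErec : ∀ m : ℕ, 1 ≤ m →
      ∑ j ∈ Finset.range (m + 1), ((2 * m).choose (2 * j) : ℚ) * E (2 * j) = 0)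

include hE0 hEodd hErec

lemma hfull (n : ℕ) :
    ∑ j ∈ range (n + 1), (n.choose j : ℚ) * E j * (1 + (-1) ^ (n - j)) =
      if n = 0 then 2 else 0 := by
  have hO : ∀ j, ¬ Even j → E j = 0 := by
    intro j hj
    obtain ⟨m, hm⟩ := Nat.odd_iff.mpr (Nat.not_even_iff.mp hj)
    rw [hm]; exact hEodd m
  have hg : ∀ j, ¬ Even j →
      (n.choose j : ℚ) * E j * (1 + (-1) ^ (n - j)) = 0 := by
    intro j hj; rw [hO j hj]; ring
  rw [sum_even_collapse _ hg]
  rcases Nat.even_or_odd n with ⟨m, hm⟩ | ⟨m, hm⟩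
  · subst hm
    have h1 : (m + m + 1 + 1) / 2 = m + 1 := by omega
    rw [h1]
    rcases Nat.eq_zero_or_pos m with h | h
    · subst h; norm_num [hE0]
    · rw [if_neg (by omega)]
      have h2 : ∀ i ∈ range (m + 1),
          ((m + m).choose (2 * i) : ℚ) * E (2 * i) * (1 + (-1) ^ (m + m - 2 * i))
            = 2 * (((2 * m).choose (2 * i) : ℚ) * E (2 * i)) := by
        intro i hi
        rw [Finset.mem_range] at hi
        have he : (-1 : ℚ) ^ (m + m - 2 * i) = 1 :=
          Even.neg_one_pow ⟨m - i, by omega⟩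
        rw [he, two_mul m]
        ring
      rw [Finset.sum_congr rfl h2, ← Finset.mul_sum, hErec m h, mul_zero]
  · subst hm
    have h1 : (2 * m + 1 + 1 + 1) / 2 = m + 1 := by omega
    rw [h1, if_neg (by omega)]
    refine Finset.sum_eq_zero fun i hi => ?_
    rw [Finset.mem_range] at hi
    have ho : (-1 : ℚ) ^ (2 * m + 1 - 2 * i) = -1 :=
      Odd.neg_one_pow ⟨m - i, by omega⟩
    rw [ho]; ring

lemma keyK (d : ℕ) :
    ∑ i ∈ range (d + 1), (d.choose i : ℚ) * E i * ((-1) ^ (d - i) + (-3) ^ (d - i))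
      = 2 * (-2) ^ d := by
  have main : ∑ j ∈ range (d + 1), ∑ i ∈ range (j + 1),
      ((d.choose j : ℚ) * (-2) ^ (d - j) * ((j.choose i : ℚ) * E i * (1 + (-1) ^ (j - i))))
      = 2 * (-2) ^ d := by
    have h1 : ∀ j ∈ range (d + 1), ∑ i ∈ range (j + 1),
        ((d.choose j : ℚ) * (-2) ^ (d - j) * ((j.choose i : ℚ) * E i * (1 + (-1) ^ (j - i))))
        = (d.choose j : ℚ) * (-2) ^ (d - j) * (if j = 0 then 2 else 0) := by
      intro j _
      rw [← Finset.mul_sum, hfull E hE0 hEodd hErec j]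
    rw [Finset.sum_congr rfl h1, Finset.sum_eq_single 0]
    · norm_num; ring
    · intro j _ hj; rw [if_neg hj]; ring
    · intro h; exact absurd (Finset.mem_range.mpr (by omega)) h
  rw [sum_triangle] at main
  rw [← main]
  refine Finset.sum_congr rfl fun i hi => ?_
  rw [Finset.mem_range] at hi
  have hNi : d + 1 - i = (d - i) + 1 := by omega
  rw [hNi]
  have h2 : ∀ r ∈ range ((d - i) + 1),
      ((d.choose (i + r) : ℚ) * (-2) ^ (d - (i + r)) *
        (((i + r).choose i : ℚ) * E i * (1 + (-1) ^ (i + r - i))))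
      = (d.choose i : ℚ) * E i * (((d - i).choose r : ℚ) * (-2) ^ ((d - i) - r) * (1 + (-1) ^ r)) := by
    intro r hr
    rw [Finset.mem_range] at hr
    have hc : (d.choose (i + r)) * ((i + r).choose i) = (d.choose i) * ((d - i).choose r) := by
      have := Nat.choose_mul (n := d) (k := i + r) (s := i) (by omega)
      simpa using this
    have hcq : ((d.choose (i + r)) : ℚ) * (((i + r).choose i) : ℚ)
        = ((d.choose i) : ℚ) * (((d - i).choose r) : ℚ) := by exact_mod_cast congrArg (Nat.cast (R := ℚ)) hc
    have he1 : d - (i + r) = (d - i) - r := by omega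
    have he2 : i + r - i = r := by omega
    rw [he1, he2]
    calc (d.choose (i + r) : ℚ) * (-2) ^ (d - i - r) *
          (((i + r).choose i : ℚ) * E i * (1 + (-1) ^ r))
        = ((d.choose (i + r) : ℚ) * ((i + r).choose i : ℚ)) *
          ((-2) ^ (d - i - r) * E i * (1 + (-1) ^ r)) := by ring
      _ = ((d.choose i : ℚ) * ((d - i).choose r : ℚ)) *
          ((-2) ^ (d - i - r) * E i * (1 + (-1) ^ r)) := by rw [hcq]
      _ = (d.choose i : ℚ) * E i * (((d - i).choose r : ℚ) * (-2) ^ ((d - i) - r) * (1 + (-1) ^ r)) := by ring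
  rw [Finset.sum_congr rfl h2, ← Finset.mul_sum, binom3]

lemma keyL (d : ℕ) :
    ∑ j ∈ range (d + 1), (d.choose j : ℚ) * (2 - E (d - j)) * ((-1) ^ j + (-3) ^ j)
      = if d = 0 then 2 else 0 := by
  have hsplit : ∀ j ∈ range (d + 1),
      (d.choose j : ℚ) * (2 - E (d - j)) * ((-1) ^ j + (-3) ^ j)
      = 2 * ((d.choose j : ℚ) * ((-1) ^ j + (-3) ^ j))
        - (d.choose j : ℚ) * E (d - j) * ((-1) ^ j + (-3) ^ j) := by
    intro j _; ring
  rw [Finset.sum_congr rfl hsplit, Finset.sum_sub_distrib, ← Finset.mul_sum, binomA]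
  have hrefl : ∑ j ∈ range (d + 1), (d.choose j : ℚ) * E (d - j) * ((-1) ^ j + (-3) ^ j)
      = ∑ i ∈ range (d + 1), (d.choose i : ℚ) * E i * ((-1) ^ (d - i) + (-3) ^ (d - i)) := by
    rw [← Finset.sum_range_reflect
      (fun i => (d.choose i : ℚ) * E i * ((-1) ^ (d - i) + (-3) ^ (d - i))) (d + 1)]
    refine Finset.sum_congr rfl fun j hj => ?_
    rw [Finset.mem_range] at hj
    have h1 : d + 1 - 1 - j = d - j := by omega
    have h2 : d - (d - j) = j := by omega
    rw [h1, h2, Nat.choose_symm (by omega : j ≤ d)]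
  rw [hrefl, keyK E hE0 hEodd hErec d]
  split_ifs with h <;> simp [h] <;> ring

end

theorem polyBernoulli_eq_sum_polyEulerSecond (E : ℕ → ℚ) (hE0 : E 0 = 1)
    (hEodd : ∀ m : ℕ, E (2 * m + 1) = 0)
    (hErec : ∀ m : ℕ, 1 ≤ m →
      ∑ j ∈ Finset.range (m + 1), ((2 * m).choose (2 * j) : ℚ) * E (2 * j) = 0)
    (k : ℤ) (n : ℕ) :
    polyBernoulli k n =
      ∑ m ∈ Finset.range (n + 1),
        (n.choose m : ℚ) * ((2 - E (n - m)) / 4 ^ n) * polyEulerSecond k m := by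
  classical
  set B : ℕ → ℚ := polyBernoulli k with hB
  set f : ℕ → ℕ → ℚ := fun m l =>
    (n.choose m : ℚ) * ((2 - E (n - m)) / 4 ^ n) *
      ((1 / 2) * ((m.choose l : ℚ) * 4 ^ l * ((-1) ^ (m - l) + (-3) ^ (m - l)) * B l))
    with hf
  have hstep : ∀ m ∈ range (n + 1),
      (n.choose m : ℚ) * ((2 - E (n - m)) / 4 ^ n) * polyEulerSecond k m
        = ∑ l ∈ range (m + 1), f m l := by
    intro m _
    simp only [polyEulerSecond, ← hB, Finset.mul_sum]
    rfl
  rw [Finset.sum_congr rfl hstep, sum_triangle f n]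
  have hinner : ∀ l ∈ range (n + 1),
      ∑ r ∈ range (n + 1 - l), f (l + r) l = if l = n then B l else 0 := by
    intro l hl
    rw [Finset.mem_range] at hl
    have hnl : n + 1 - l = (n - l) + 1 := by omega
    rw [hnl]
    have hterm : ∀ r ∈ range ((n - l) + 1),
        f (l + r) l = ((n.choose l : ℚ) * 4 ^ l / 4 ^ n * (1 / 2) * B l) *
          (((n - l).choose r : ℚ) * (2 - E ((n - l) - r)) * ((-1) ^ r + (-3) ^ r)) := by
      intro r hr
      rw [Finset.mem_range] at hr
      have hc : (n.choose (l + r)) * ((l + r).choose l) = (n.choose l) * ((n - l).choose r) := by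
        have := Nat.choose_mul (n := n) (k := l + r) (s := l) (by omega)
        simpa using this
      have hcq : ((n.choose (l + r)) : ℚ) * (((l + r).choose l) : ℚ)
          = ((n.choose l) : ℚ) * (((n - l).choose r) : ℚ) := by
        exact_mod_cast congrArg (Nat.cast (R := ℚ)) hc
      have he1 : n - (l + r) = (n - l) - r := by omega
      have he2 : l + r - l = r := by omega
      simp only [hf, he1, he2]
      linear_combination
        ((2 - E ((n - l) - r)) * 4 ^ l * ((-1 : ℚ) ^ r + (-3 : ℚ) ^ r) * B l / 4 ^ n / 2) * hcq
    rw [Finset.sum_congr rfl hterm, ← Finset.mul_sum, keyL E hE0 hEodd hErec (n - l)]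
    by_cases h : l = n
    · subst h
      simp only [Nat.sub_self, if_pos rfl, Nat.choose_self, Nat.cast_one]
      have h4 : (4 : ℚ) ^ l ≠ 0 := by positivity
      field_simp
      rw [if_pos trivial, if_pos trivial]; ring
    · rw [if_neg (by omega), if_neg h, mul_zero]
  rw [Finset.sum_congr rfl hinner, Finset.sum_ite_eq' (range (n + 1)) n B,
    if_pos (Finset.self_mem_range_succ n)]
end

section
/- For all nonnegative integers n and k: Ê_n^{(−k)} ≡ 0 (mod 2) if n is odd, and Ê_n^{(−k)} ≡ 1 (mod 2) if n is even. -/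
open Finset

lemma alt_sum_choose_pow : ∀ (t : ℕ) (m : ℕ), t < m →
    ∑ j ∈ range (m + 1), (-1 : ℤ) ^ j * (m.choose j) * (j : ℤ) ^ t = 0 := by
  intro t
  induction t using Nat.strong_induction_on with
  | _ t ih =>
  match t with
  | 0 =>
    intro m hm
    simp only [pow_zero, mul_one]
    exact Int.alternating_sum_range_choose_of_ne (by omega)
  | (k+1) =>
    intro m hm
    obtain ⟨m', rfl⟩ : ∃ m', m = m' + 1 := ⟨m - 1, by omega⟩
    have hk : k < m' := by omega
    rw [Finset.sum_range_succ']
    simp only [Nat.cast_zero, ne_eq, Nat.succ_ne_zero, not_false_iff, zero_pow, mul_zero,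
      add_zero]
    have key : ∀ i ∈ range (m' + 1),
        (-1 : ℤ) ^ (i + 1) * ((m' + 1).choose (i + 1)) * ((i + 1 : ℕ) : ℤ) ^ (k + 1)
        = -((m' : ℤ) + 1) * ((-1 : ℤ) ^ i * (m'.choose i) *
            ∑ s ∈ range (k + 1), (i : ℤ) ^ s * (k.choose s)) := by
      intro i hi
      have h1 : ((i : ℤ) + 1) * ((m' + 1).choose (i + 1)) = ((m' : ℤ) + 1) * (m'.choose i) := by
        have := Nat.add_one_mul_choose_eq m' i
        push_cast [Nat.succ_eq_add_one] at this ⊢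
        linarith [this]
      have h3 : ((i : ℤ) + 1) ^ k = ∑ s ∈ range (k + 1), (i : ℤ) ^ s * (k.choose s) := by
        simpa using (add_pow (i : ℤ) 1 k)
      push_cast
      linear_combination ((-1 : ℤ) ^ (i + 1) * ((i : ℤ) + 1) ^ k) * h1 +
        (-((m' : ℤ) + 1) * (-1 : ℤ) ^ i * ((m'.choose i : ℤ))) * h3
    rw [Finset.sum_congr rfl key, ← Finset.mul_sum]
    have : ∑ i ∈ range (m' + 1), ((-1 : ℤ) ^ i * (m'.choose i) *
        ∑ s ∈ range (k + 1), (i : ℤ) ^ s * (k.choose s)) = 0 := by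
      have h : ∀ i ∈ range (m' + 1), (-1 : ℤ) ^ i * (m'.choose i) *
          ∑ s ∈ range (k + 1), (i : ℤ) ^ s * (k.choose s)
          = ∑ s ∈ range (k + 1), (k.choose s : ℤ) * ((-1 : ℤ) ^ i * (m'.choose i) * (i : ℤ) ^ s) := by
        intro i _
        rw [Finset.mul_sum]
        exact Finset.sum_congr rfl fun s _ => by ring
      rw [Finset.sum_congr rfl h, Finset.sum_comm]
      refine Finset.sum_eq_zero fun s hs => ?_
      rw [← Finset.mul_sum, ih s (Finset.mem_range.mp hs) m' (by have := Finset.mem_range.mp hs; omega), mul_zero]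
    rw [this, mul_zero]

lemma alt_sum_choose_shift (k : ℕ) :
    ∑ i ∈ range (k + 1), (-1 : ℤ) ^ i * ((k + 1).choose (i + 1)) * (i : ℤ) ^ k = (-1) ^ k := by
  have hF : ∑ j ∈ range (k + 2), (-1 : ℤ) ^ j * ((k + 1).choose j) * ((j : ℤ) - 1) ^ k = 0 := by
    have hexp : ∀ j ∈ range (k + 2), (-1 : ℤ) ^ j * ((k + 1).choose j) * ((j : ℤ) - 1) ^ k
        = ∑ s ∈ range (k + 1), ((-1 : ℤ) ^ (k - s) * (k.choose s)) *
            ((-1 : ℤ) ^ j * ((k + 1).choose j) * (j : ℤ) ^ s) := by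
      intro j _
      have h3 : ((j : ℤ) - 1) ^ k = ∑ s ∈ range (k + 1),
          (j : ℤ) ^ s * (-1 : ℤ) ^ (k - s) * (k.choose s) := by
        simpa [sub_eq_add_neg] using (add_pow (j : ℤ) (-1) k)
      rw [h3, Finset.mul_sum]
      exact Finset.sum_congr rfl fun s _ => by ring
    rw [Finset.sum_congr rfl hexp, Finset.sum_comm]
    refine Finset.sum_eq_zero fun s hs => ?_
    rw [← Finset.mul_sum]
    rw [show k + 2 = (k + 1) + 1 from rfl,
      alt_sum_choose_pow s (k + 1) (Finset.mem_range.mp hs),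
      mul_zero]
  rw [Finset.sum_range_succ'] at hF
  simp only [Nat.cast_add, Nat.cast_one, Nat.cast_zero, Nat.choose_zero_right, Nat.cast_ofNat] at hF
  have e : ∀ i ∈ range (k + 1), (-1 : ℤ) ^ (i + 1) * ((k + 1).choose (i + 1)) * ((i : ℤ) + 1 - 1) ^ k
      = -((-1 : ℤ) ^ i * ((k + 1).choose (i + 1)) * (i : ℤ) ^ k) := by
    intro i _
    ring_nf
  rw [Finset.sum_congr rfl e, Finset.sum_neg_distrib] at hF
  have : ((0 : ℤ) - 1) ^ k = (-1) ^ k := by ring_nf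
  linarith [hF]

lemma sum_c (k : ℕ) :
    ∑ l ∈ range (k + 1), ∑ i ∈ range (l + 1), (-1 : ℤ) ^ i * (l.choose i) * (i : ℤ) ^ k
      = (-1) ^ k := by
  have step1 : ∀ l ∈ range (k + 1),
      ∑ i ∈ range (l + 1), (-1 : ℤ) ^ i * (l.choose i) * (i : ℤ) ^ k
      = ∑ i ∈ range (k + 1), (-1 : ℤ) ^ i * (l.choose i) * (i : ℤ) ^ k := by
    intro l hl
    apply Finset.sum_subset
    · intro x hx; simp only [Finset.mem_range] at *; omega
    · intro x hx hnx
      simp only [Finset.mem_range] at hx hnx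
      rw [Nat.choose_eq_zero_of_lt (by omega)]
      simp
  rw [Finset.sum_congr rfl step1, Finset.sum_comm]
  have step2 : ∀ i ∈ range (k + 1),
      ∑ l ∈ range (k + 1), (-1 : ℤ) ^ i * (l.choose i) * (i : ℤ) ^ k
      = (-1 : ℤ) ^ i * ((k + 1).choose (i + 1)) * (i : ℤ) ^ k := by
    intro i hi
    have h0 : ∑ l ∈ range (k + 1), l.choose i = ∑ l ∈ Icc i k, l.choose i := by
      symm
      apply Finset.sum_subset
      · intro x hx; simp only [Finset.mem_Icc, Finset.mem_range] at *; omega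
      · intro x hx hnx
        simp only [Finset.mem_Icc, Finset.mem_range] at hx hnx
        exact Nat.choose_eq_zero_of_lt (by omega)
    have h : ∑ l ∈ range (k + 1), (l.choose i : ℤ) = ((k + 1).choose (i + 1) : ℤ) := by
      rw [← Nat.cast_sum, h0, Nat.sum_Icc_choose]
    calc ∑ l ∈ range (k + 1), (-1 : ℤ) ^ i * (l.choose i) * (i : ℤ) ^ k
        = ((-1 : ℤ) ^ i * (i : ℤ) ^ k) * ∑ l ∈ range (k + 1), (l.choose i : ℤ) := by
          rw [Finset.mul_sum]; exact Finset.sum_congr rfl fun l _ => by ring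
      _ = (-1 : ℤ) ^ i * ((k + 1).choose (i + 1)) * (i : ℤ) ^ k := by rw [h]; ring
  rw [Finset.sum_congr rfl step2]
  exact alt_sum_choose_shift k

lemma polyEuler_eq (n k : ℕ) : polyEulerSecondNeg n k
    = ((-1) ^ k / 2) *
      ((∑ l ∈ range (k + 1),
        (∑ i ∈ range (l + 1), (-1 : ℤ) ^ i * (l.choose i) * (i : ℤ) ^ k) *
          ((4 * (l : ℤ) + 3) ^ n + (4 * (l : ℤ) + 1) ^ n) : ℤ) : ℚ) := by
  unfold polyEulerSecondNeg stirling2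
  push_cast
  congr 1
  refine Finset.sum_congr rfl fun l hl => ?_
  set S : ℚ := ∑ i ∈ range (l + 1), (-1 : ℚ) ^ (l - i) * (l.choose i) * (i : ℚ) ^ k with hSdef
  set A : ℚ := (4 * (l : ℚ) + 3) ^ n + (4 * (l : ℚ) + 1) ^ n with hAdef
  have hS : (-1 : ℚ) ^ l * S = ∑ i ∈ range (l + 1), (-1 : ℚ) ^ i * (l.choose i) * (i : ℚ) ^ k := by
    rw [hSdef, Finset.mul_sum]
    refine Finset.sum_congr rfl fun i hi => ?_
    have hil : i ≤ l := Nat.lt_succ_iff.mp (Finset.mem_range.mp hi)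
    have hpow : (-1 : ℚ) ^ l * (-1 : ℚ) ^ (l - i) = (-1) ^ i := by
      rw [← pow_add, show l + (l - i) = 2 * (l - i) + i by omega, pow_add, pow_mul]
      norm_num
    linear_combination ((l.choose i : ℚ) * (i : ℚ) ^ k) * hpow
  have hfac : (l.factorial : ℚ) * (1 / (l.factorial : ℚ)) = 1 := by
    rw [mul_one_div, div_self]
    exact_mod_cast l.factorial_ne_zero
  rw [← hS]
  linear_combination ((-1 : ℚ) ^ l * S * A) * hfac

theorem polyEulerSecondNeg_parity (n k : ℕ) :
    (Odd n → ∃ z : ℤ, polyEulerSecondNeg n k = 2 * (z : ℚ)) ∧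
    (Even n → ∃ z : ℤ, polyEulerSecondNeg n k = 2 * (z : ℚ) + 1) := by
  classical
  set c : ℕ → ℤ := fun l => ∑ i ∈ range (l + 1), (-1 : ℤ) ^ i * (l.choose i) * (i : ℤ) ^ k with hcdef
  set A : ℕ → ℤ := fun l => (4 * (l : ℤ) + 3) ^ n + (4 * (l : ℤ) + 1) ^ n with hAdef
  have hPE : polyEulerSecondNeg n k
      = ((-1) ^ k / 2) * ((∑ l ∈ range (k + 1), c l * A l : ℤ) : ℚ) := polyEuler_eq n k
  set T : ℤ := ∑ l ∈ range (k + 1), c l * A l with hTdef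
  have hsumc : ∑ l ∈ range (k + 1), c l = (-1) ^ k := sum_c k
  have hdvd : (4 : ℤ) ∣ T - (3 ^ n + 1) * (-1) ^ k := by
    have h1 : T - (3 ^ n + 1) * (-1) ^ k
        = ∑ l ∈ range (k + 1), c l * (A l - (3 ^ n + 1)) := by
      rw [← hsumc, Finset.mul_sum, hTdef, ← Finset.sum_sub_distrib]
      exact Finset.sum_congr rfl fun l _ => by ring
    rw [h1]
    refine Finset.dvd_sum fun l _ => Dvd.dvd.mul_left ?_ _
    have d1 : (4 : ℤ) ∣ (4 * (l : ℤ) + 3) ^ n - 3 ^ n :=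
      dvd_trans ⟨(l : ℤ), by ring⟩ (sub_dvd_pow_sub_pow _ _ n)
    have d2 : (4 : ℤ) ∣ (4 * (l : ℤ) + 1) ^ n - 1 := by
      have h := dvd_trans (⟨(l : ℤ), by ring⟩ : (4 : ℤ) ∣ (4 * (l : ℤ) + 1) - 1)
        (sub_dvd_pow_sub_pow (4 * (l : ℤ) + 1) 1 n)
      simpa using h
    have hAl : A l - (3 ^ n + 1)
        = ((4 * (l : ℤ) + 3) ^ n - 3 ^ n) + ((4 * (l : ℤ) + 1) ^ n - 1) := by
      simp only [hAdef]; ring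
    rw [hAl]
    exact dvd_add d1 d2
  obtain ⟨u, hu⟩ := hdvd
  have hkk : (-1 : ℚ) ^ k * (-1 : ℚ) ^ k = 1 := by
    rw [← pow_add, show k + k = 2 * k by ring, pow_mul]; norm_num
  constructor
  · intro hn
    have h4 : (4 : ℤ) ∣ 3 ^ n + 1 := by
      have h := sub_dvd_pow_sub_pow (3 : ℤ) (-1) n
      rw [hn.neg_one_pow] at h
      norm_num at h
      simpa using h
    obtain ⟨r, hr⟩ := h4
    refine ⟨(-1) ^ k * u + r, ?_⟩
    rw [hPE]
    have hT : (T : ℚ) = 4 * u + 4 * r * (-1) ^ k := by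
      have : T = 4 * u + 4 * r * (-1) ^ k := by linear_combination hu + (-1 : ℤ) ^ k * hr
      exact_mod_cast this
    rw [hT]
    push_cast
    linear_combination (2 * (r : ℚ)) * hkk
  · intro hn
    obtain ⟨m, hm⟩ := hn
    have h4 : (4 : ℤ) ∣ 3 ^ n - 1 := by
      have h9 : (3 : ℤ) ^ n = 9 ^ m := by rw [hm, pow_add, ← mul_pow]; norm_num
      have h := sub_dvd_pow_sub_pow (9 : ℤ) 1 m
      norm_num at h
      rw [h9]
      exact dvd_trans (by norm_num : (4 : ℤ) ∣ 8) h
    obtain ⟨r, hr⟩ := h4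
    refine ⟨(-1) ^ k * u + r, ?_⟩
    rw [hPE]
    have hT : (T : ℚ) = 4 * u + (4 * r + 2) * (-1) ^ k := by
      have : T = 4 * u + (4 * r + 2) * (-1) ^ k := by
        linear_combination hu + (-1 : ℤ) ^ k * hr
      exact_mod_cast this
    rw [hT]
    push_cast
    linear_combination (2 * (r : ℚ) + 1) * hkk
end
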